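/- arXiv:2401.00362 — 10 statements merged into one kernel-verified Lean document; each statement's English description precedes it below -/
import Mathlib

section
/- Let M be an n×n real symmetric matrix and let u ≠ v be twin indices with respect to M (that is, M_{u,w} = M_{v,w} for all w ∉ {u,v} and M_{u,u} = M_{v,v}). If u is not sedentary, i.e. inf_{t>0} |U(t)_{u,u}| = 0, then pretty good state transfer occurs between u and v: there is a sequence of times (t_k) with |U(t_k)_{u,v}| → 1. Consequently every twin vertex is either sedentary or involved in pretty good state transfer. -/
/-- The continuous-time quantum walk transition matrix `U(t) = exp(itM)` of a real
symmetric matrix `M`, as a complex matrix. -/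
noncomputable def qwU {V : Type*} [Fintype V] [DecidableEq V]
    (M : Matrix V V ℝ) (t : ℝ) : Matrix V V ℂ :=
  NormedSpace.exp ((Complex.I * t) • M.map (↑· : ℝ → ℂ))

open Matrix in
lemma exp_mulVec_eigen {n : ℕ} (A : Matrix (Fin n) (Fin n) ℂ) (x : Fin n → ℂ) (c : ℂ)
    (h : A.mulVec x = c • x) :
    (NormedSpace.exp A).mulVec x = NormedSpace.exp c • x := by
  letI : SeminormedRing (Matrix (Fin n) (Fin n) ℂ) := Matrix.linftyOpSemiNormedRing
  letI : NormedRing (Matrix (Fin n) (Fin n) ℂ) := Matrix.linftyOpNormedRing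
  letI : NormedAlgebra ℂ (Matrix (Fin n) (Fin n) ℂ) := Matrix.linftyOpNormedAlgebra
  have hpow : ∀ k : ℕ, (A ^ k).mulVec x = c ^ k • x := by
    intro k
    induction k with
    | zero => simp
    | succ k ih =>
      rw [pow_succ, ← Matrix.mulVec_mulVec, h, mulVec_smul, ih, smul_smul, pow_succ, mul_comm]
  have hcont : Continuous fun B : Matrix (Fin n) (Fin n) ℂ => B.mulVec x := by
    apply continuous_pi
    intro i
    simp only [Matrix.mulVec, dotProduct]
    exact continuous_finset_sum _ fun j _ =>
      (Continuous.matrix_elem continuous_id i j).mul continuous_const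
  let L : Matrix (Fin n) (Fin n) ℂ →ₗ[ℂ] (Fin n → ℂ) :=
    { toFun := fun B => B.mulVec x
      map_add' := fun B C => Matrix.add_mulVec B C x
      map_smul' := fun a B => Matrix.smul_mulVec a B x }
  let Lc : Matrix (Fin n) (Fin n) ℂ →L[ℂ] (Fin n → ℂ) := ⟨L, hcont⟩
  have hLc : ∀ B, Lc B = B.mulVec x := fun _ => rfl
  have hsum : Summable (fun k : ℕ => (((Nat.factorial k) : ℂ))⁻¹ • A ^ k) :=
    NormedSpace.expSeries_summable' A
  have hsumc : Summable (fun k : ℕ => (((Nat.factorial k) : ℂ))⁻¹ • c ^ k) :=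
    NormedSpace.expSeries_summable' c
  calc (NormedSpace.exp A).mulVec x
      = Lc (∑' k : ℕ, (((Nat.factorial k) : ℂ))⁻¹ • A ^ k) := by
        rw [NormedSpace.exp_eq_tsum ℂ]; exact (hLc _).symm
    _ = ∑' k : ℕ, Lc ((((Nat.factorial k) : ℂ))⁻¹ • A ^ k) := Lc.map_tsum hsum
    _ = ∑' k : ℕ, ((((Nat.factorial k) : ℂ))⁻¹ • c ^ k) • x := by
        congr 1; ext k
        rw [hLc, Matrix.smul_mulVec, hpow, smul_smul, smul_eq_mul]
    _ = (∑' k : ℕ, (((Nat.factorial k) : ℂ))⁻¹ • c ^ k) • x := hsumc.tsum_smul_const x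
    _ = NormedSpace.exp c • x := by rw [NormedSpace.exp_eq_tsum ℂ]

lemma qwU_key {n : ℕ} (M : Matrix (Fin n) (Fin n) ℝ)
    (hM : M.IsSymm) (u v : Fin n) (huv : u ≠ v)
    (htwin : ∀ w : Fin n, w ≠ u → w ≠ v → M u w = M v w)
    (hdiag : M u u = M v v) (t : ℝ) :
    ‖qwU M t u u - qwU M t u v‖ = 1 := by
  set x : Fin n → ℂ := Pi.single u 1 - Pi.single v 1 with hx
  have hMx : (M.map (↑· : ℝ → ℂ)).mulVec x = ((M u u - M u v : ℝ) : ℂ) • x := by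
    rw [hx, Matrix.mulVec_sub]
    ext i
    simp only [Matrix.mulVec_single, Matrix.map_apply, Pi.sub_apply, Pi.smul_apply,
      smul_eq_mul, mul_one]
    rcases eq_or_ne i u with rfl | hiu
    · simp [Pi.single_apply, huv, huv.symm]
    · rcases eq_or_ne i v with rfl | hiv
      · have h1 : M i u = M u i := hM.apply u i
        simp [Pi.single_apply, huv, huv.symm, h1, hdiag]
      · have h1 : M i u = M u i := hM.apply u i
        have h2 : M i v = M v i := hM.apply v i
        simp [Pi.single_apply, hiu, hiv, h1, h2, htwin i hiu hiv]
  have hAx : ((Complex.I * t) • M.map (↑· : ℝ → ℂ)).mulVec x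
      = (Complex.I * t * ((M u u - M u v : ℝ) : ℂ)) • x := by
    rw [Matrix.smul_mulVec, hMx, smul_smul]
  have hexp := exp_mulVec_eigen _ x _ hAx
  have hu : ((qwU M t).mulVec x) u
      = NormedSpace.exp (Complex.I * t * ((M u u - M u v : ℝ) : ℂ)) := by
    rw [qwU, hexp]
    simp [hx, Pi.single_apply, huv.symm]
  have hu' : ((qwU M t).mulVec x) u = qwU M t u u - qwU M t u v := by
    rw [hx, Matrix.mulVec_sub]
    simp
  rw [← hu', hu]
  have : NormedSpace.exp (Complex.I * t * ((M u u - M u v : ℝ) : ℂ))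
      = Complex.exp (((t * (M u u - M u v) : ℝ) : ℂ) * Complex.I) := by
    rw [Complex.exp_eq_exp_ℂ]
    push_cast
    ring_nf
  rw [this, Complex.norm_exp_ofReal_mul_I]

/-- If `u` and `v` are twins and `u` is not sedentary (the infimum over positive times of
`|U(t)_{u,u}|` is zero), then pretty good state transfer occurs between `u` and `v`.
Consequently every twin vertex is either sedentary or involved in pretty good state
transfer. -/
theorem twin_not_sedentary_implies_pgst {n : ℕ} (M : Matrix (Fin n) (Fin n) ℝ)
    (hM : M.IsSymm) (u v : Fin n) (huv : u ≠ v)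
    (htwin : ∀ w : Fin n, w ≠ u → w ≠ v → M u w = M v w)
    (hdiag : M u u = M v v)
    (hnotsed : sInf ((fun t => ‖qwU M t u u‖) '' Set.Ioi (0 : ℝ)) = 0) :
    ∃ tk : ℕ → ℝ,
      Filter.Tendsto (fun k => ‖qwU M (tk k) u v‖) Filter.atTop (nhds 1) := by
  have hkey := qwU_key M hM u v huv htwin hdiag
  have hex : ∀ k : ℕ, ∃ t : ℝ, 0 < t ∧ ‖qwU M t u u‖ < 1 / (k + 1) := by
    intro k
    have hne : ((fun t => ‖qwU M t u u‖) '' Set.Ioi (0 : ℝ)).Nonempty :=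
      ⟨_, ⟨1, by norm_num, rfl⟩⟩
    have hlt : sInf ((fun t => ‖qwU M t u u‖) '' Set.Ioi (0 : ℝ)) < 1 / (k + 1) := by
      rw [hnotsed]; positivity
    obtain ⟨y, ⟨t, ht, rfl⟩, hy⟩ := exists_lt_of_csInf_lt hne hlt
    exact ⟨t, ht, hy⟩
  refine ⟨fun k => (hex k).choose, ?_⟩
  set tk : ℕ → ℝ := fun k => (hex k).choose with htk
  have hg : ∀ k : ℕ, ‖qwU M (tk k) u u‖ < 1 / (k + 1) := fun k => (hex k).choose_spec.2
  have hg0 : Filter.Tendsto (fun k => ‖qwU M (tk k) u u‖) Filter.atTop (nhds 0) := by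
    apply squeeze_zero (fun k => norm_nonneg _) (fun k => (hg k).le)
    exact tendsto_one_div_add_atTop_nhds_zero_nat
  have hlow : ∀ k : ℕ, 1 - ‖qwU M (tk k) u u‖ ≤ ‖qwU M (tk k) u v‖ := by
    intro k
    have := norm_sub_le (qwU M (tk k) u u) (qwU M (tk k) u v)
    rw [hkey (tk k)] at this
    linarith
  have hhigh : ∀ k : ℕ, ‖qwU M (tk k) u v‖
      ≤ 1 + ‖qwU M (tk k) u u‖ := by
    intro k
    have h2 := norm_sub_le (qwU M (tk k) u u)
      (qwU M (tk k) u u - qwU M (tk k) u v)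
    rw [sub_sub_cancel, hkey (tk k)] at h2
    linarith
  have h1 : Filter.Tendsto (fun k => 1 - ‖qwU M (tk k) u u‖)
      Filter.atTop (nhds 1) := by
    simpa using (tendsto_const_nhds (x := (1:ℝ))).sub hg0
  have h2 : Filter.Tendsto (fun k => 1 + ‖qwU M (tk k) u u‖)
      Filter.atTop (nhds 1) := by
    simpa using (tendsto_const_nhds (x := (1:ℝ))).add hg0
  exact tendsto_of_tendsto_of_tendsto_of_le_of_le h1 h2 hlow hhigh
end

section
/- Let M be an n×n real symmetric matrix, T a twin set with respect to M containing u, with common diagonal entry ω and common off-diagonal entry η among vertices of T, and let θ = ω − η. Let E_θ be the matrix of the orthogonal projection of ℝ^n onto the eigenspace ker(M − θI). Then (E_θ)_{u,u} ≥ 1 − 1/|T|, and for all real t, |U(t)_{u,u}| ≥ 2(E_θ)_{u,u} − 1. In particular, if |T| ≥ 3 then |U(t)_{u,u}| ≥ 1 − 2/|T| for all t. -/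
open Matrix Finset

section Aux

variable {n : ℕ}

lemma aux_herm (M : Matrix (Fin n) (Fin n) ℝ) (hM : M.IsSymm) :
    (M.map (↑· : ℝ → ℂ)).IsHermitian := by
  ext i j
  simp [Matrix.conjTranspose_apply, Matrix.map_apply, hM.apply i j, Complex.conj_ofReal]

/-- entry of `V * diagonal d * star V`. -/
lemma conj_diag_apply (V : Matrix (Fin n) (Fin n) ℂ) (d : Fin n → ℂ) (u : Fin n) :
    (V * Matrix.diagonal d * star V) u u = ∑ s, d s * (V u s * (starRingEnd ℂ) (V u s)) := by
  rw [Matrix.mul_apply]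
  refine Finset.sum_congr rfl fun s _ => ?_
  rw [Matrix.mul_diagonal, Matrix.star_apply, Complex.star_def]
  ring

end Aux

/-- Let `T` be a twin set containing `u`, with common diagonal entry `ω` and common
off-diagonal entry `η`, and let `θ = ω - η`.  Let `E` be the matrix of the orthogonal
projection onto the eigenspace `ker(M - θI)` (characterized as the symmetric idempotent
matrix whose fixed points are exactly the `θ`-eigenvectors).  Then
`E_{u,u} ≥ 1 - 1/|T|`, and `|U(t)_{u,u}| ≥ 2 E_{u,u} - 1` for all `t`; in particular if
`|T| ≥ 3` then `|U(t)_{u,u}| ≥ 1 - 2/|T|` for all `t`. -/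
theorem twin_set_projection_bound {n : ℕ} (M : Matrix (Fin n) (Fin n) ℝ) (hM : M.IsSymm)
    (T : Finset (Fin n)) (ω η : ℝ) (u : Fin n) (huT : u ∈ T) (hT : 2 ≤ T.card)
    (htwin : ∀ x ∈ T, ∀ y ∈ T, x ≠ y → ∀ w ∉ T, M x w = M y w)
    (hdiag : ∀ x ∈ T, M x x = ω)
    (hoff : ∀ x ∈ T, ∀ y ∈ T, x ≠ y → M x y = η)
    (E : Matrix (Fin n) (Fin n) ℝ) (hE1 : E.IsSymm) (hE2 : E * E = E)
    (hE3 : ∀ x : Fin n → ℝ, E.mulVec x = x ↔ M.mulVec x = (ω - η) • x) :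
    1 - 1 / (T.card : ℝ) ≤ E u u ∧
    (∀ t : ℝ, 2 * E u u - 1 ≤ ‖qwU M t u u‖) ∧
    (3 ≤ T.card → ∀ t : ℝ, 1 - 2 / (T.card : ℝ) ≤ ‖qwU M t u u‖) := by
  set θ : ℝ := ω - η with hθ
  set a : ℝ := E u u with ha
  set k : ℝ := (T.card : ℝ) with hk
  have hk2 : (2 : ℝ) ≤ k := by rw [hk]; exact_mod_cast hT
  have hk0 : (0 : ℝ) < k := by linarith
  -- Step 1: for v ∈ T, v ≠ u, `e_u - e_v` is a θ-eigenvector, hence fixed by E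
  have key1 : ∀ v ∈ T, v ≠ u → E u v = a - 1 := by
    intro v hvT hvu
    set x : Fin n → ℝ := (Pi.single u 1 - Pi.single v 1) with hx
    have hsym : ∀ i j, M i j = M j i := fun i j => hM.apply j i
    have hMx : M.mulVec x = θ • x := by
      funext w
      have h1 : M.mulVec x w = M w u - M w v := by
        simp only [hx, Pi.sub_apply, Matrix.mulVec, dotProduct, Pi.single_apply,
          mul_sub, Finset.sum_sub_distrib, mul_ite, mul_one, mul_zero]
        rw [Finset.sum_ite_eq' Finset.univ u, Finset.sum_ite_eq' Finset.univ v]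
        simp
      rw [h1]
      simp only [Pi.smul_apply, smul_eq_mul]
      by_cases hwu : w = u
      · subst hwu
        rw [hdiag w huT, hoff w huT v hvT (Ne.symm hvu)]
        have hxw : x w = 1 := by simp [hx, Pi.single_apply, Ne.symm hvu]
        rw [hxw, hθ]; ring
      · by_cases hwv : w = v
        · subst hwv
          rw [hsym w u, hoff u huT w hvT (Ne.symm hvu), hdiag w hvT]
          have hxw : x w = -1 := by simp [hx, Pi.single_apply, hvu, hwu]
          rw [hxw, hθ]; ring
        · have hxw : x w = 0 := by simp [hx, Pi.single_apply, hwu, hwv]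
          rw [hxw, mul_zero]
          by_cases hwT : w ∈ T
          · rw [hoff w hwT u huT hwu, hoff w hwT v hvT hwv, sub_self]
          · have h2 : M u w = M v w := htwin u huT v hvT (Ne.symm hvu) w hwT
            rw [hsym w u, hsym w v, h2, sub_self]
    have hEx : E.mulVec x = x := (hE3 x).2 hMx
    have := congrFun hEx u
    have h1 : E.mulVec x u = E u u - E u v := by
      simp [hx, Matrix.mulVec_sub, Matrix.mulVec_single, mul_one]
    have h2 : x u = 1 := by simp [hx, Pi.single_apply, hvu]
    rw [h1, h2] at this
    linarith
  -- Step 2: sum of squares of row u of E equals `a`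
  have hrow : ∑ j, (E u j) ^ 2 = a := by
    have h1 : (E * E) u u = ∑ j, E u j * E j u := Matrix.mul_apply
    rw [hE2] at h1
    rw [ha, h1]
    refine Finset.sum_congr rfl fun j _ => ?_
    rw [sq, hE1.apply j u]
  -- Step 3: the quadratic inequality
  have hquad : a ^ 2 + (k - 1) * (a - 1) ^ 2 ≤ a := by
    have hsub : insert u (T.erase u) ⊆ Finset.univ := Finset.subset_univ _
    have hle : ∑ j ∈ insert u (T.erase u), (E u j) ^ 2 ≤ ∑ j, (E u j) ^ 2 :=
      Finset.sum_le_sum_of_subset_of_nonneg hsub (fun j _ _ => sq_nonneg _)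
    rw [hrow] at hle
    rw [Finset.sum_insert (Finset.notMem_erase u T)] at hle
    have hconst : ∑ j ∈ T.erase u, (E u j) ^ 2 = (k - 1) * (a - 1) ^ 2 := by
      rw [Finset.sum_congr rfl fun j hj => ?_, Finset.sum_const, nsmul_eq_mul]
      · rw [Finset.card_erase_of_mem huT]
        have : ((T.card - 1 : ℕ) : ℝ) = k - 1 := by
          rw [Nat.cast_sub (by omega)]; simp [hk]
        rw [this]
      · rw [key1 j (Finset.mem_of_mem_erase hj) (Finset.ne_of_mem_erase hj)]
    rw [hconst] at hle
    linarith
  have part1 : 1 - 1 / k ≤ a := by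
    have hH : 0 ≤ a - (a ^ 2 + (k - 1) * (a - 1) ^ 2) := by linarith
    have h1 : k - 1 ≤ k * a := by
      nlinarith [mul_nonneg hk0.le hH, sq_nonneg (k - 1 - k * a)]
    have h2 : 1 - 1 / k = (k - 1) / k := by field_simp
    rw [h2, div_le_iff₀ hk0]
    linarith
  have part2 : ∀ t : ℝ, 2 * a - 1 ≤ ‖qwU M t u u‖ := by
    -- Step 4: spectral argument
    intro t
    set M' : Matrix (Fin n) (Fin n) ℂ := M.map (↑· : ℝ → ℂ) with hM'def
    have hM' : M'.IsHermitian := aux_herm M hM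
    set V : Matrix (Fin n) (Fin n) ℂ := (hM'.eigenvectorUnitary : Matrix (Fin n) (Fin n) ℂ)
      with hVdef
    set lam : Fin n → ℝ := hM'.eigenvalues with hlam
    have hVV' : V * star V = 1 := (Matrix.mem_unitaryGroup_iff).mp hM'.eigenvectorUnitary.2
    have hVV : star V * V = 1 := (Matrix.mem_unitaryGroup_iff').mp hM'.eigenvectorUnitary.2
    have hspec : M' = V * Matrix.diagonal (fun r => (lam r : ℂ)) * star V := by
      have := hM'.spectral_theorem
      rw [this, Unitary.conjStarAlgAut_apply]; rfl
    have hVunit : IsUnit V := ⟨⟨V, star V, hVV', hVV⟩, rfl⟩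
    have hVinv : V⁻¹ = star V := Matrix.inv_eq_left_inv hVV
    -- the c_s
    set c : Fin n → ℝ := fun s => Complex.normSq (V u s) with hc
    have hcnn : ∀ s, 0 ≤ c s := fun s => Complex.normSq_nonneg _
    have hmc : ∀ s, V u s * (starRingEnd ℂ) (V u s) = (c s : ℂ) := fun s =>
      Complex.mul_conj _
    have hcsum : ∑ s, c s = 1 := by
      have h1 : (V * star V) u u = (1 : ℂ) := by rw [hVV']; simp
      have h2 : (V * star V) u u = ∑ s, (c s : ℂ) := by
        simp only [Matrix.mul_apply, Matrix.star_apply, Matrix.conjTranspose_apply]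
        exact Finset.sum_congr rfl fun s _ => hmc s
      rw [h2] at h1
      exact_mod_cast h1
    -- p
    set p : ℝ := ∑ s, (if lam s = θ then c s else 0) with hp
    -- the projection P onto the θ-eigenspace
    set ind : Fin n → ℂ := fun r => if lam r = θ then 1 else 0 with hind
    set P : Matrix (Fin n) (Fin n) ℂ := V * Matrix.diagonal ind * star V with hPdef
    set E' : Matrix (Fin n) (Fin n) ℂ := E.map (↑· : ℝ → ℂ) with hE'def
    -- M E = θ E over ℝ, then over ℂ
    have hME : M * E = θ • E := by
      ext i j
      have hcol : E.mulVec (fun w => E w j) = fun w => E w j := by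
        funext w
        have : (E * E) w j = E w j := by rw [hE2]
        simpa [Matrix.mul_apply, Matrix.mulVec, dotProduct] using this
      have := congrFun ((hE3 (fun w => E w j)).1 hcol) i
      simpa [Matrix.mul_apply, Matrix.mulVec, dotProduct, hθ] using this
    have hME' : M' * E' = (θ : ℂ) • E' := by
      ext i j
      have := congrFun (congrFun hME i) j
      simp only [Matrix.mul_apply, Matrix.smul_apply, smul_eq_mul] at this ⊢
      simp only [hM'def, hE'def, Matrix.map_apply]
      push_cast
      exact_mod_cast congrArg (Complex.ofReal) this
    -- Y := star V * E'
    set Y : Matrix (Fin n) (Fin n) ℂ := star V * E' with hY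
    have hDY : Matrix.diagonal (fun r => (lam r : ℂ)) * Y = (θ : ℂ) • Y := by
      have h1 : V * (Matrix.diagonal (fun r => (lam r : ℂ)) * Y) = V * ((θ : ℂ) • Y) := by
        calc V * (Matrix.diagonal (fun r => (lam r : ℂ)) * Y)
            = (V * Matrix.diagonal (fun r => (lam r : ℂ)) * star V) * E' := by
              rw [hY]; noncomm_ring
          _ = M' * E' := by rw [← hspec]
          _ = (θ : ℂ) • E' := hME'
          _ = (θ : ℂ) • ((V * star V) * E') := by rw [hVV', Matrix.one_mul]
          _ = V * ((θ : ℂ) • Y) := by rw [hY]; rw [Matrix.mul_smul, Matrix.mul_assoc]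
      calc Matrix.diagonal (fun r => (lam r : ℂ)) * Y
          = (star V * V) * (Matrix.diagonal (fun r => (lam r : ℂ)) * Y) := by
            rw [hVV, Matrix.one_mul]
        _ = star V * (V * ((θ : ℂ) • Y)) := by rw [Matrix.mul_assoc, h1]
        _ = (star V * V) * ((θ : ℂ) • Y) := by rw [Matrix.mul_assoc]
        _ = (θ : ℂ) • Y := by rw [hVV, Matrix.one_mul]
    have hYzero : ∀ r j, lam r ≠ θ → Y r j = 0 := by
      intro r j hrθ
      have := congrFun (congrFun hDY r) j
      rw [Matrix.diagonal_mul] at this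
      simp only [Matrix.smul_apply, smul_eq_mul] at this
      have hne : ((lam r : ℂ) - θ) ≠ 0 := by
        intro h
        apply hrθ
        have := sub_eq_zero.mp h
        exact_mod_cast this
      have : ((lam r : ℂ) - θ) * Y r j = 0 := by ring_nf; ring_nf at this; linear_combination this
      exact (mul_eq_zero.mp this).resolve_left hne
    have hindY : Matrix.diagonal ind * Y = Y := by
      ext r j
      rw [Matrix.diagonal_mul]
      by_cases hr : lam r = θ
      · simp [hind, hr]
      · simp [hind, hr, hYzero r j hr]
    have hPE : P * E' = E' := by
      calc P * E' = V * (Matrix.diagonal ind * Y) := by rw [hPdef, hY]; noncomm_ring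
        _ = V * Y := by rw [hindY]
        _ = (V * star V) * E' := by rw [hY, Matrix.mul_assoc]
        _ = E' := by rw [hVV', Matrix.one_mul]
    have hE'H : E'ᴴ = E' := by
      ext i j
      simp [hE'def, Matrix.conjTranspose_apply, Matrix.map_apply, Complex.conj_ofReal,
        hE1.apply i j]
    have hPH : Pᴴ = P := by
      rw [hPdef]
      rw [Matrix.conjTranspose_mul, Matrix.conjTranspose_mul, Matrix.diagonal_conjTranspose]
      have h1 : (star V)ᴴ = V := by rw [← Matrix.star_eq_conjTranspose]; exact star_star V
      have h2 : star (ind) = ind := by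
        funext r
        simp only [Pi.star_apply, hind]
        by_cases h : lam r = θ <;> simp [h]
      rw [h1, h2, Matrix.mul_assoc]
      rfl
    have hEP : E' * P = E' := by
      have := congrArg Matrix.conjTranspose hPE
      rwa [Matrix.conjTranspose_mul, hE'H, hPH] at this
    have hE'E' : E' * E' = E' := by
      ext i j
      have := congrFun (congrFun hE2 i) j
      simp only [Matrix.mul_apply, hE'def, Matrix.map_apply] at this ⊢
      push_cast
      exact_mod_cast congrArg Complex.ofReal this
    have hPP : P * P = P := by
      have hdd : Matrix.diagonal ind * Matrix.diagonal ind = Matrix.diagonal ind := by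
        rw [Matrix.diagonal_mul_diagonal]
        exact congrArg _ (funext fun r => by by_cases h : lam r = θ <;> simp [hind, h])
      calc P * P = V * (Matrix.diagonal ind * ((star V * V) * Matrix.diagonal ind)) * star V := by
            rw [hPdef]; noncomm_ring
        _ = V * (Matrix.diagonal ind * Matrix.diagonal ind) * star V := by
            rw [hVV, Matrix.one_mul]
        _ = P := by rw [hdd, hPdef]
    -- Q := P - E' is Hermitian idempotent, so diagonal ≥ 0
    set Q : Matrix (Fin n) (Fin n) ℂ := P - E' with hQ
    have hQQ : Q * Q = Q := by
      rw [hQ, Matrix.sub_mul, Matrix.mul_sub, Matrix.mul_sub, hPP, hPE, hEP, hE'E']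
      abel
    have hQH : Qᴴ = Q := by rw [hQ, Matrix.conjTranspose_sub, hPH, hE'H]
    have hQuu : Q u u = ∑ s, (Complex.normSq (Q u s) : ℂ) := by
      conv_lhs => rw [← hQQ]
      rw [Matrix.mul_apply]
      refine Finset.sum_congr rfl fun s _ => ?_
      have hqs : Q s u = (starRingEnd ℂ) (Q u s) := by
        have h := congrFun (congrFun hQH s) u
        rw [Matrix.conjTranspose_apply] at h
        exact h.symm
      rw [hqs, Complex.mul_conj]
    have hPuu : P u u = (p : ℂ) := by
      rw [hPdef, conj_diag_apply]
      rw [hp]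
      push_cast
      refine Finset.sum_congr rfl fun s _ => ?_
      rw [hmc s]
      simp only [hind]
      split <;> simp
    have hEuu : E' u u = (a : ℂ) := by simp [hE'def, Matrix.map_apply, ha]
    have hap : a ≤ p := by
      have h1 : Q u u = (p : ℂ) - (a : ℂ) := by rw [hQ, Matrix.sub_apply, hPuu, hEuu]
      rw [h1] at hQuu
      have h2 : (p : ℂ) - (a : ℂ) = ((∑ s, Complex.normSq (Q u s) : ℝ) : ℂ) := by
        rw [hQuu]; push_cast; ring
      have h3 : p - a = ∑ s, Complex.normSq (Q u s) := by exact_mod_cast h2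
      have h4 : 0 ≤ ∑ s, Complex.normSq (Q u s) :=
        Finset.sum_nonneg fun s _ => Complex.normSq_nonneg _
      linarith
    -- the entry of U(t)
    have hexp : qwU M t = V * Matrix.diagonal (fun r => Complex.exp (Complex.I * t * lam r))
        * star V := by
      have h1 : (Complex.I * t) • M' =
          V * ((Complex.I * t) • Matrix.diagonal (fun r => (lam r : ℂ))) * V⁻¹ := by
        rw [hVinv, hspec, Matrix.mul_smul, Matrix.smul_mul]
      rw [qwU, ← hM'def, h1, Matrix.exp_conj V _ hVunit, hVinv]
      congr 1
      congr 1
      rw [← Matrix.diagonal_smul, Matrix.exp_diagonal, Pi.exp_def]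
      refine congrArg Matrix.diagonal (funext fun r => ?_)
      rw [Pi.smul_apply, smul_eq_mul, ← Complex.exp_eq_exp_ℂ]
    have hUuu : qwU M t u u = ∑ s, Complex.exp (Complex.I * t * lam s) * (c s : ℂ) := by
      rw [hexp, conj_diag_apply]
      exact Finset.sum_congr rfl fun s _ => by rw [hmc s]
    -- real part bound
    have hre : (Complex.exp (-(Complex.I * t * θ)) * qwU M t u u).re
        = ∑ s, Real.cos (t * (lam s - θ)) * c s := by
      rw [hUuu, Finset.mul_sum]
      rw [Complex.re_sum]
      refine Finset.sum_congr rfl fun s _ => ?_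
      rw [← mul_assoc, ← Complex.exp_add]
      have harg : -(Complex.I * t * θ) + Complex.I * t * lam s
          = ((t * (lam s - θ) : ℝ) : ℂ) * Complex.I := by push_cast; ring
      rw [harg]
      rw [mul_comm (Complex.exp _) ((c s : ℂ))]
      rw [Complex.re_ofReal_mul, Complex.exp_ofReal_mul_I_re]
      ring
    have hcos : ∑ s, (if lam s = θ then c s else -(c s)) ≤ ∑ s, Real.cos (t * (lam s - θ)) * c s := by
      refine Finset.sum_le_sum fun s _ => ?_
      by_cases hs : lam s = θ
      · simp [hs, Real.cos_zero]
      · simp only [hs, if_false]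
        have h1 : -1 ≤ Real.cos (t * (lam s - θ)) := Real.neg_one_le_cos _
        nlinarith [hcnn s]
    have hsplit : ∑ s, (if lam s = θ then c s else -(c s)) = 2 * p - 1 := by
      have : ∀ s : Fin n, (if lam s = θ then c s else -(c s))
          = 2 * (if lam s = θ then c s else 0) - c s := by
        intro s; split <;> ring
      rw [Finset.sum_congr rfl fun s _ => this s, Finset.sum_sub_distrib, ← Finset.mul_sum,
        hcsum, ← hp]
    have habs : 2 * p - 1 ≤ ‖qwU M t u u‖ := by
      have h1 : (Complex.exp (-(Complex.I * t * θ)) * qwU M t u u).re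
          ≤ ‖Complex.exp (-(Complex.I * t * θ)) * qwU M t u u‖ :=
        Complex.re_le_norm _
      have h2 : ‖Complex.exp (-(Complex.I * t * θ))‖ = 1 := by
        rw [Complex.norm_exp]
        have : (-(Complex.I * t * θ)).re = 0 := by simp
        rw [this, Real.exp_zero]
      rw [norm_mul, h2, one_mul] at h1
      rw [hre] at h1
      calc 2 * p - 1 = ∑ s, (if lam s = θ then c s else -(c s)) := hsplit.symm
        _ ≤ ∑ s, Real.cos (t * (lam s - θ)) * c s := hcos
        _ ≤ ‖qwU M t u u‖ := h1
    linarith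
  refine ⟨part1, part2, fun _ t => ?_⟩
  have h2k : 2 / k = 2 * (1 / k) := by ring
  have := part2 t
  linarith
end

section
/- Let X = K_{n_1,…,n_k} be the complete multipartite graph on n = n_1 + … + n_k ≥ 3 vertices with k ≥ 2 parts, let L be its Laplacian matrix and U(t) = exp(itL). If n_ℓ = 1 for some ℓ and u is the unique vertex in that part, then |U(t)_{u,u}| ≥ 1 − 2/n for all t, with equality at t = jπ/n for every odd integer j; thus u is tightly (1 − 2/n)-sedentary. -/
/-- The Laplacian matrix `L = D - A` of the complete multipartite graph
`K_{n 0, …, n (k-1)}`, whose vertices are pairs `⟨i, a⟩` with `i` a part and `a` a vertex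
of that part; two vertices are adjacent iff they lie in different parts, and every vertex
has degree `(∑ i, n i) - n i`. -/
def cmLap {k : ℕ} (n : Fin k → ℕ) :
    Matrix ((i : Fin k) × Fin (n i)) ((i : Fin k) × Fin (n i)) ℝ :=
  Matrix.of fun u v =>
    (if u = v then (∑ i, (n i : ℝ)) - (n u.1 : ℝ) else 0) - (if u.1 = v.1 then 0 else 1)

open NormedSpace in
theorem exp_mulVec_eigen_s4 {V : Type*} [Fintype V] [DecidableEq V]
    (A : Matrix V V ℂ) (v : V → ℂ) (c : ℂ) (h : A.mulVec v = c • v) :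
    (exp A).mulVec v = exp c • v := by
  letI : SeminormedRing (Matrix V V ℂ) := Matrix.linftyOpSemiNormedRing
  letI : NormedRing (Matrix V V ℂ) := Matrix.linftyOpNormedRing
  letI : NormedAlgebra ℂ (Matrix V V ℂ) := Matrix.linftyOpNormedAlgebra
  have hpow : ∀ m : ℕ, (A ^ m).mulVec v = c ^ m • v := by
    intro m
    induction m with
    | zero => simp [Matrix.one_mulVec]
    | succ m ih =>
      rw [pow_succ, ← Matrix.mulVec_mulVec, h, Matrix.mulVec_smul, ih, pow_succ]
      rw [smul_smul, mul_comm]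
  let f : Matrix V V ℂ →ₗ[ℂ] (V → ℂ) :=
    { toFun := fun M => M.mulVec v
      map_add' := fun M N => Matrix.add_mulVec M N v
      map_smul' := fun r M => (Matrix.smul_mulVec r M v) }
  have h1 : HasSum (fun m : ℕ => ((m.factorial : ℂ)⁻¹) • A ^ m) (exp A) :=
    exp_series_hasSum_exp' A
  have h2 := h1.mapL (LinearMap.toContinuousLinearMap f)
  have h2' : HasSum (fun m : ℕ => ((m.factorial : ℂ)⁻¹ * c ^ m) • v) ((exp A).mulVec v) := by
    convert h2 using 2 with m
    show _ = ((m.factorial : ℂ)⁻¹ • A ^ m).mulVec v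
    rw [Matrix.smul_mulVec]
    rw [hpow, smul_smul]
    all_goals rfl
  have h3 : HasSum (fun m : ℕ => ((m.factorial : ℂ)⁻¹ * c ^ m) • v) (exp c • v) := by
    have := (exp_series_hasSum_exp' (𝕂 := ℂ) c).mapL
      (ContinuousLinearMap.smulRight (ContinuousLinearMap.id ℂ ℂ) v)
    convert this using 2 with m
    · simp
    · simp
  exact h2'.unique h3

section cm

variable {k : ℕ} (n : Fin k → ℕ)

lemma part_count (i0 : Fin k) :
    ∑ v : (i : Fin k) × Fin (n i), (if i0 = v.1 then (1:ℂ) else 0) = (n i0 : ℂ) := by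
  rw [← Finset.univ_sigma_univ, Finset.sum_sigma]
  have h : ∀ x : Fin k, ∑ _b : Fin (n x), (if i0 = x then (1:ℂ) else 0)
      = if i0 = x then (n x : ℂ) else 0 := by
    intro x; split <;> simp
  rw [Finset.sum_congr rfl (fun x _ => h x), Finset.sum_ite_eq]
  simp

lemma total_count :
    ∑ _v : (i : Fin k) × Fin (n i), (1:ℂ) = ((∑ i, n i : ℕ) : ℂ) := by
  rw [← Finset.univ_sigma_univ, Finset.sum_sigma]
  simp

lemma cmLapC_apply (w v : (i : Fin k) × Fin (n i)) :
    ((cmLap n).map (↑· : ℝ → ℂ)) w v =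
      (if w = v then ((∑ i, n i : ℕ) : ℂ) - (n w.1 : ℂ) else 0)
        - (if w.1 = v.1 then 0 else 1) := by
  simp only [Matrix.map_apply, cmLap, Matrix.of_apply]
  split_ifs <;> push_cast <;> ring

lemma cmLapC_mulVec_one :
    ((cmLap n).map (↑· : ℝ → ℂ)).mulVec (fun _ => 1) = 0 := by
  ext w
  simp only [Matrix.mulVec, dotProduct, mul_one, Pi.zero_apply]
  rw [Finset.sum_congr rfl (fun v _ => cmLapC_apply n w v)]
  rw [Finset.sum_sub_distrib, Finset.sum_ite_eq]
  have h1 : ∑ v : (i : Fin k) × Fin (n i), (if w.1 = v.1 then (0:ℂ) else 1)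
      = ((∑ i, n i : ℕ) : ℂ) - (n w.1 : ℂ) := by
    have : ∀ v : (i : Fin k) × Fin (n i), (if w.1 = v.1 then (0:ℂ) else 1)
        = 1 - (if w.1 = v.1 then (1:ℂ) else 0) := by
      intro v; split <;> simp
    rw [Finset.sum_congr rfl (fun v _ => this v), Finset.sum_sub_distrib,
      total_count, part_count]
  rw [h1]
  simp

lemma cmLapC_mulVec_single (ℓ : Fin k) (hℓ : n ℓ = 1)
    (u : (i : Fin k) × Fin (n i)) (hu : u.1 = ℓ) :
    ((cmLap n).map (↑· : ℝ → ℂ)).mulVec (Pi.single u 1) =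
      ((∑ i, n i : ℕ) : ℂ) • (Pi.single u 1 : ((i : Fin k) × Fin (n i)) → ℂ)
        - fun _ => 1 := by
  ext w
  rw [Matrix.mulVec_single]
  simp only [mul_one, Pi.sub_apply, Pi.smul_apply, smul_eq_mul, MulOpposite.op_one, one_smul,
    Matrix.col_apply]
  rw [cmLapC_apply]
  by_cases hw : w = u
  · subst hw
    simp [hu, hℓ]
  · have hw1 : w.1 ≠ u.1 := by
      intro h
      apply hw
      obtain ⟨wi, wa⟩ := w
      obtain ⟨ui, ua⟩ := u
      dsimp at h hu
      subst h
      subst hu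
      have hn1 : n wi = 1 := hℓ
      have hwa := wa.2
      have hua := ua.2
      have : wa = ua := by
        apply Fin.ext
        omega
      rw [this]
    simp [hw, hw1, Pi.single_eq_of_ne hw]

lemma qwU_entry (hN : 3 ≤ ∑ i, n i) (ℓ : Fin k) (hℓ : n ℓ = 1)
    (u : (i : Fin k) × Fin (n i)) (hu : u.1 = ℓ) (t : ℝ) :
    qwU (cmLap n) t u u =
      Complex.exp (Complex.I * t * ((∑ i, n i : ℕ) : ℂ)) * (1 - (((∑ i, n i : ℕ) : ℂ))⁻¹)
        + (((∑ i, n i : ℕ) : ℂ))⁻¹ := by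
  set N : ℕ := ∑ i, n i with hNdef
  have hN0 : (N : ℂ) ≠ 0 := by
    simp only [Ne, Nat.cast_eq_zero]
    omega
  set Lc := (cmLap n).map (↑· : ℝ → ℂ) with hLc
  set A := (Complex.I * t) • Lc with hA
  set o : ((i : Fin k) × Fin (n i)) → ℂ := fun _ => 1 with ho
  set e : ((i : Fin k) × Fin (n i)) → ℂ := Pi.single u 1 with he
  set v2 := e - (N : ℂ)⁻¹ • o with hv2
  have h0 : A.mulVec o = (0 : ℂ) • o := by
    rw [hA, Matrix.smul_mulVec, hLc, ho, cmLapC_mulVec_one]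
    simp
  have h2 : A.mulVec v2 = (Complex.I * t * N) • v2 := by
    have hLv2 : Lc.mulVec v2 = (N : ℂ) • v2 := by
      rw [hv2, Matrix.mulVec_sub, Matrix.mulVec_smul, hLc, he, ho,
        cmLapC_mulVec_single n ℓ hℓ u hu, cmLapC_mulVec_one]
      rw [smul_sub, smul_smul, mul_inv_cancel₀ hN0]
      simp only [smul_zero, sub_zero, one_smul]
      rfl
    rw [hA, Matrix.smul_mulVec, hLv2, smul_smul]
  have hexp0 := exp_mulVec_eigen_s4 A o 0 h0
  have hexp2 := exp_mulVec_eigen_s4 A v2 _ h2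
  rw [NormedSpace.exp_zero, one_smul] at hexp0
  have heu : (NormedSpace.exp A).mulVec e =
      NormedSpace.exp (Complex.I * t * N) • v2 + (N : ℂ)⁻¹ • o := by
    have hsplit : e = v2 + (N : ℂ)⁻¹ • o := by rw [hv2, sub_add_cancel]
    rw [hsplit, Matrix.mulVec_add, Matrix.mulVec_smul, hexp2, hexp0]
  have hval : qwU (cmLap n) t u u = ((NormedSpace.exp A).mulVec e) u := by
    rw [he, Matrix.mulVec_single]
    simp [qwU, hA, hLc]
  rw [hval, heu]
  simp only [Pi.add_apply, Pi.smul_apply, hv2, Pi.sub_apply, he, ho,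
    Pi.single_eq_same, smul_eq_mul]
  rw [Complex.exp_eq_exp_ℂ]
  ring

end cm

/-- In the complete multipartite graph `K_{n_1,…,n_k}` on `n ≥ 3` vertices with `k ≥ 2`
parts, a vertex `u` lying in a part of size `1` satisfies `|U(t)_{u,u}| ≥ 1 - 2/n` for
all `t`, with equality at `t = jπ/n` for every odd integer `j`; i.e. `u` is tightly
`(1 - 2/n)`-sedentary with respect to the Laplacian. -/
theorem cmg_part_one_tightly_sedentary {k : ℕ} (n : Fin k → ℕ)
    (hk : 2 ≤ k) (hpos : ∀ i, 0 < n i) (hN : 3 ≤ ∑ i, n i)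
    (ℓ : Fin k) (hℓ : n ℓ = 1)
    (u : (i : Fin k) × Fin (n i)) (hu : u.1 = ℓ) :
    (∀ t : ℝ, 1 - 2 / ((∑ i, n i : ℕ) : ℝ) ≤ ‖qwU (cmLap n) t u u‖) ∧
    (∀ j : ℤ, Odd j →
      ‖qwU (cmLap n) ((j : ℝ) * Real.pi / ((∑ i, n i : ℕ) : ℝ)) u u‖
        = 1 - 2 / ((∑ i, n i : ℕ) : ℝ)) := by
  set N : ℕ := ∑ i, n i with hNdef
  have hN3 : (3 : ℝ) ≤ (N : ℝ) := by exact_mod_cast hN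
  have hNR0 : (N : ℝ) ≠ 0 := by linarith
  have hNC0 : (N : ℂ) ≠ 0 := by
    simp only [Ne, Nat.cast_eq_zero]; omega
  have hinv : (N : ℝ)⁻¹ ≤ 1/3 := by
    rw [inv_le_comm₀ (by linarith) (by norm_num)]
    linarith
  have ha : (0 : ℝ) ≤ 1 - (N : ℝ)⁻¹ := by linarith
  have hb : (0 : ℝ) ≤ (N : ℝ)⁻¹ := by positivity
  have hsplit2 : 1 - 2 / (N : ℝ) = (1 - (N:ℝ)⁻¹) - (N:ℝ)⁻¹ := by
    rw [div_eq_mul_inv]; ring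
  constructor
  · intro t
    rw [qwU_entry n hN ℓ hℓ u hu t]
    set z := Complex.exp (Complex.I * t * (N : ℂ)) with hz
    have hzabs : ‖z‖ = 1 := by
      rw [hz, Complex.norm_exp]
      have hre : (Complex.I * t * (N : ℂ)).re = 0 := by simp
      rw [hre, Real.exp_zero]
    have habs1 : ‖z * (1 - (N:ℂ)⁻¹)‖ = 1 - (N:ℝ)⁻¹ := by
      rw [norm_mul, hzabs, one_mul]
      have hc : ((1 : ℂ) - (N:ℂ)⁻¹) = ((1 - (N:ℝ)⁻¹ : ℝ) : ℂ) := by push_cast; ring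
      rw [hc, Complex.norm_real, Real.norm_eq_abs, abs_of_nonneg ha]
    have habs2 : ‖(N:ℂ)⁻¹‖ = (N:ℝ)⁻¹ := by
      have hc : ((N:ℂ)⁻¹) = (((N:ℝ)⁻¹ : ℝ) : ℂ) := by push_cast; ring
      rw [hc, Complex.norm_real, Real.norm_eq_abs, abs_of_nonneg hb]
    have htri : ‖z * (1 - (N:ℂ)⁻¹)‖
        ≤ ‖z * (1 - (N:ℂ)⁻¹) + (N:ℂ)⁻¹‖ + ‖(N:ℂ)⁻¹‖ := by
      calc ‖z * (1 - (N:ℂ)⁻¹)‖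
          = ‖(z * (1 - (N:ℂ)⁻¹) + (N:ℂ)⁻¹) + (-(N:ℂ)⁻¹)‖ := by
            congr 1; ring
        _ ≤ ‖z * (1 - (N:ℂ)⁻¹) + (N:ℂ)⁻¹‖ + ‖-(N:ℂ)⁻¹‖ :=
            norm_add_le _ _
        _ = ‖z * (1 - (N:ℂ)⁻¹) + (N:ℂ)⁻¹‖ + ‖(N:ℂ)⁻¹‖ := by
            rw [norm_neg]
    rw [habs1, habs2] at htri
    linarith [hsplit2]
  · intro j hj
    rw [qwU_entry n hN ℓ hℓ u hu]
    have ht : Complex.I * ((j : ℝ) * Real.pi / (N : ℝ) : ℝ) * (N : ℂ)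
        = (j : ℂ) * Real.pi * Complex.I := by
      push_cast
      field_simp
    rw [ht]
    obtain ⟨m, hm⟩ := hj
    have hexp : Complex.exp ((j : ℂ) * Real.pi * Complex.I) = -1 := by
      have hc : (j : ℂ) * Real.pi * Complex.I
          = (m : ℂ) * (2 * Real.pi * Complex.I) + Real.pi * Complex.I := by
        rw [hm]; push_cast; ring
      rw [hc, Complex.exp_add, Complex.exp_int_mul_two_pi_mul_I, Complex.exp_pi_mul_I]
      ring
    rw [hexp]
    have hc : (-1 : ℂ) * (1 - (N:ℂ)⁻¹) + (N:ℂ)⁻¹ = ((-(1 - 2 * (N:ℝ)⁻¹) : ℝ) : ℂ) := by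
      push_cast; ring
    have hle : -(1 - 2 * (N:ℝ)⁻¹) ≤ 0 := by linarith
    rw [hc, Complex.norm_real, Real.norm_eq_abs, abs_of_nonpos hle, neg_neg, div_eq_mul_inv]
end

section
/- Let X = K_{n_1,…,n_k} be the complete multipartite graph, let A be its adjacency matrix and U(t) = exp(itA). If n_ℓ ≥ 3 for some ℓ, then every vertex u in the part of size n_ℓ satisfies |U(t)_{u,u}| ≥ 1 − 2/n_ℓ for all t. -/
open scoped Matrix ComplexInnerProductSpace
open NormedSpace

lemma exp_mulVec_of_mulVec_eq_zero {V : Type*} [Fintype V] [DecidableEq V]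
    (M : Matrix V V ℂ) (w : V → ℂ) (h : M *ᵥ w = 0) :
    NormedSpace.exp M *ᵥ w = w := by
  letI : SeminormedRing (Matrix V V ℂ) := Matrix.linftyOpSemiNormedRing
  letI : NormedRing (Matrix V V ℂ) := Matrix.linftyOpNormedRing
  letI : NormedAlgebra ℂ (Matrix V V ℂ) := Matrix.linftyOpNormedAlgebra
  let f : Matrix V V ℂ →ₗ[ℂ] (V → ℂ) :=
    { toFun := fun X => X *ᵥ w
      map_add' := fun X Y => Matrix.add_mulVec X Y w
      map_smul' := fun c X => Matrix.smul_mulVec c X w }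
  let fc : Matrix V V ℂ →L[ℂ] (V → ℂ) := LinearMap.toContinuousLinearMap f
  have hfc : ∀ X, fc X = X *ᵥ w := fun X => rfl
  have : NormedSpace.exp M *ᵥ w = fc (∑' k : ℕ, ((Nat.factorial k : ℂ)⁻¹) • M ^ k) := by
    rw [exp_eq_tsum ℂ]
    rfl
  rw [this, fc.map_tsum (NormedSpace.expSeries_summable' (𝕂 := ℂ) M)]
  rw [tsum_eq_single 0]
  · simp [hfc, Matrix.one_mulVec]
  · intro k hk
    obtain ⟨m, rfl⟩ := Nat.exists_eq_succ_of_ne_zero hk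
    rw [hfc, Matrix.smul_mulVec, pow_succ, ← Matrix.mulVec_mulVec, h,
      Matrix.mulVec_zero, smul_zero]

lemma exp_skew_unitary {V : Type*} [Fintype V] [DecidableEq V] (M : Matrix V V ℂ)
    (h : Mᴴ = -M) : (NormedSpace.exp M)ᴴ * NormedSpace.exp M = 1 := by
  rw [← Matrix.exp_conjTranspose, h,
    ← Matrix.exp_add_of_commute _ _ (Commute.neg_left (Commute.refl M)),
    neg_add_cancel, exp_zero]

lemma dot_abs_le {V : Type*} [Fintype V] [DecidableEq V] (U : Matrix V V ℂ)
    (hU : Uᴴ * U = 1) (χ : V → ℂ) (hχ : star χ = χ) (N : ℝ) (hN : 0 ≤ N)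
    (hχχ : χ ⬝ᵥ χ = (N : ℂ)) :
    ‖χ ⬝ᵥ (U *ᵥ χ)‖ ≤ N := by
  set s : V → ℂ := U *ᵥ χ with hs
  have hss : star s ⬝ᵥ s = (N : ℂ) := by
    rw [hs, Matrix.star_mulVec, Matrix.dotProduct_mulVec, Matrix.vecMul_vecMul,
      hU, Matrix.vecMul_one, hχ, hχχ]
  set χ' : EuclideanSpace ℂ V := (WithLp.equiv 2 (V → ℂ)).symm χ with hχ'
  set s' : EuclideanSpace ℂ V := (WithLp.equiv 2 (V → ℂ)).symm s with hs'
  have hinner : ∀ x y : V → ℂ,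
      ⟪(WithLp.equiv 2 (V → ℂ)).symm x, (WithLp.equiv 2 (V → ℂ)).symm y⟫ = star x ⬝ᵥ y := by
    intro x y
    simp [PiLp.inner_apply, dotProduct, RCLike.inner_apply, mul_comm]
  have h1 : ⟪χ', s'⟫ = χ ⬝ᵥ s := by rw [hχ', hs', hinner, hχ]
  have h2 : ‖χ'‖ ^ 2 = N := by
    have := norm_sq_eq_re_inner (𝕜 := ℂ) χ'
    rw [this, hinner, hχ, hχχ] ; simp
  have h3 : ‖s'‖ ^ 2 = N := by
    have := norm_sq_eq_re_inner (𝕜 := ℂ) s'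
    rw [this, hinner, hss] ; simp
  have h4 : ‖⟪χ', s'⟫‖ ≤ ‖χ'‖ * ‖s'‖ := norm_inner_le_norm χ' s'
  have h5 : (‖χ'‖ * ‖s'‖) ^ 2 = N * N := by rw [mul_pow, h2, h3]
  have h6 : ‖χ'‖ * ‖s'‖ ≤ N := by
    nlinarith [norm_nonneg χ', norm_nonneg s', mul_nonneg (norm_nonneg χ') (norm_nonneg s')]
  calc ‖χ ⬝ᵥ s‖ = ‖⟪χ', s'⟫‖ := by rw [h1]
    _ ≤ ‖χ'‖ * ‖s'‖ := h4
    _ ≤ N := h6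

/-- The 0-1 adjacency matrix of the complete multipartite graph `K_{n 0, …, n (k-1)}`:
two vertices are adjacent iff they lie in different parts. -/
def cmAdj {k : ℕ} (n : Fin k → ℕ) :
    Matrix ((i : Fin k) × Fin (n i)) ((i : Fin k) × Fin (n i)) ℝ :=
  Matrix.of fun u v => if u.1 = v.1 then 0 else 1

/-- In the complete multipartite graph `K_{n_1,…,n_k}`, every vertex `u` in a part of
size `n_ℓ ≥ 3` satisfies `|U(t)_{u,u}| ≥ 1 - 2/n_ℓ` for all `t`, with respect to the
adjacency matrix. -/
theorem cmg_adjacency_big_part_sedentary {k : ℕ} (n : Fin k → ℕ) (hpos : ∀ i, 0 < n i)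
    (ℓ : Fin k) (hℓ : 3 ≤ n ℓ)
    (u : (i : Fin k) × Fin (n i)) (hu : u.1 = ℓ) :
    ∀ t : ℝ, 1 - 2 / (n ℓ : ℝ) ≤ ‖qwU (cmAdj n) t u u‖ := by
  intro t
  obtain ⟨i0, a⟩ := u
  dsimp only at hu
  subst hu
  set A : Matrix ((i : Fin k) × Fin (n i)) ((i : Fin k) × Fin (n i)) ℂ :=
    (cmAdj n).map (↑· : ℝ → ℂ) with hAdef
  set M : Matrix ((i : Fin k) × Fin (n i)) ((i : Fin k) × Fin (n i)) ℂ :=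
    (Complex.I * t) • A with hMdef
  set U := NormedSpace.exp M with hUdef
  have hq : qwU (cmAdj n) t = U := rfl
  set N : ℝ := (n i0 : ℝ) with hNdef
  have hN3 : (3 : ℝ) ≤ N := by rw [hNdef]; exact_mod_cast hℓ
  have hN0 : (0 : ℝ) < N := by linarith
  have hNne : (n i0 : ℂ) ≠ 0 := Nat.cast_ne_zero.2 (by omega)
  set u : (i : Fin k) × Fin (n i) := ⟨i0, a⟩ with hudef
  set χ : ((i : Fin k) × Fin (n i)) → ℂ := fun x => if x.1 = i0 then 1 else 0 with hχdef
  set e : ((i : Fin k) × Fin (n i)) → ℂ := fun x => if x = u then 1 else 0 with hedef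
  set c : ℂ := (n i0 : ℂ)⁻¹ with hcdef
  set w : ((i : Fin k) × Fin (n i)) → ℂ := e - c • χ with hwdef
  have hA : ∀ v x, A v x = if v.1 = x.1 then 0 else 1 := by
    intro v x
    simp [hAdef, cmAdj, Matrix.map_apply, apply_ite]
  have hde : ∀ f : ((i : Fin k) × Fin (n i)) → ℂ, f ⬝ᵥ e = f u := by
    intro f
    simp [dotProduct, hedef, mul_ite, mul_one, mul_zero, Finset.sum_ite_eq']
  have hed : ∀ f : ((i : Fin k) × Fin (n i)) → ℂ, e ⬝ᵥ f = f u := by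
    intro f
    simp [dotProduct, hedef, ite_mul, one_mul, zero_mul, Finset.sum_ite_eq]
  -- sum of χ
  have hsumχ : ∑ x, χ x = (n i0 : ℂ) := by
    rw [← Finset.univ_sigma_univ, Finset.sum_sigma]
    simp [hχdef, apply_ite Finset.card, apply_ite (Nat.cast : ℕ → ℂ), Finset.sum_ite_eq,
      Finset.sum_ite_eq', Finset.card_univ]
  have hχχ : χ ⬝ᵥ χ = (n i0 : ℂ) := by
    have h : ∀ x, χ x * χ x = χ x := by
      intro x; by_cases h : x.1 = i0 <;> simp [hχdef, h]
    rw [dotProduct]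
    simp_rw [h]
    exact hsumχ
  have hχu : χ u = 1 := by simp [hχdef, hudef]
  have hχw : χ ⬝ᵥ w = 0 := by
    simp only [hwdef, dotProduct_sub, dotProduct_smul, hde, hχu, hχχ,
      smul_eq_mul]
    rw [hcdef]
    field_simp
    ring
  have heu : e u = 1 := by simp [hedef]
  have hww : w ⬝ᵥ w = 1 - c := by
    simp only [hwdef, sub_dotProduct, dotProduct_sub, smul_dotProduct,
      dotProduct_smul, hde, hed, heu, hχu, hχχ, smul_eq_mul]
    rw [hcdef]
    field_simp
    rw [Pi.sub_apply, Pi.smul_apply, smul_eq_mul, heu, hχu, mul_one, mul_sub,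
      mul_one_div_cancel hNne]
    ring
  -- part sums of w vanish
  have hpart : ∀ i : Fin k, ∑ j : Fin (n i), w ⟨i, j⟩ = 0 := by
    intro i
    rcases eq_or_ne i i0 with h | h
    · subst h
      have hterm : ∀ j : Fin (n i), w ⟨i, j⟩ = (if j = a then 1 else 0) - c := by
        intro j
        rw [hwdef]
        simp [hedef, hχdef, hudef]
      simp_rw [hterm]
      rw [Finset.sum_sub_distrib, Finset.sum_const, Finset.sum_ite_eq']
      simp only [Finset.mem_univ, if_true, Finset.card_univ, Fintype.card_fin, nsmul_eq_mul]
      rw [hcdef]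
      field_simp
      ring
    · have hterm : ∀ j : Fin (n i), w ⟨i, j⟩ = 0 := by
        intro j
        rw [hwdef]
        simp [hedef, hχdef, hudef, h]
      simp [hterm]
  have hsumw : ∑ x, w x = 0 := by
    rw [← Finset.univ_sigma_univ, Finset.sum_sigma]
    exact Finset.sum_eq_zero fun i _ => hpart i
  have hAw : A *ᵥ w = 0 := by
    funext v
    have step : ∀ x, A v x * w x = w x - (if v.1 = x.1 then w x else 0) := by
      intro x
      rw [hA]
      by_cases h : v.1 = x.1 <;> simp [h]
    have hT : ∑ x, (if v.1 = x.1 then w x else 0) = 0 := by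
      rw [← Finset.univ_sigma_univ, Finset.sum_sigma]
      refine Finset.sum_eq_zero fun i _ => ?_
      by_cases h : v.1 = i
      · subst h; simp [hpart v.1]
      · simp [h]
    show ∑ x, A v x * w x = 0
    simp_rw [step]
    rw [Finset.sum_sub_distrib, hsumw, hT, sub_zero]
  have hMw : M *ᵥ w = 0 := by
    rw [hMdef, Matrix.smul_mulVec, hAw, smul_zero]
  have hUw : U *ᵥ w = w := exp_mulVec_of_mulVec_eq_zero M w hMw
  have hAT : Aᵀ = A := by
    ext v x
    rw [Matrix.transpose_apply, hA, hA]
    exact if_congr eq_comm rfl rfl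
  have hAstar : ∀ v x, star (A v x) = A v x := by
    intro v x
    rw [hA]
    by_cases h : v.1 = x.1 <;> simp [h]
  have hUT : Uᵀ = U := by
    rw [hUdef, ← Matrix.exp_transpose, hMdef, Matrix.transpose_smul, hAT]
  have hMH : Mᴴ = -M := by
    ext v x
    rw [Matrix.conjTranspose_apply, Matrix.neg_apply, hMdef, Matrix.smul_apply,
      Matrix.smul_apply, smul_eq_mul, smul_eq_mul, star_mul']
    have hvx : A x v = A v x := by
      rw [hA, hA]; exact if_congr eq_comm rfl rfl
    rw [hAstar x v, hvx]
    simp [Complex.star_def, Complex.conj_I]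
  have hUnit : Uᴴ * U = 1 := exp_skew_unitary M hMH
  have hχstar : star χ = χ := by
    funext x
    by_cases h : x.1 = i0 <;> simp [hχdef, h]
  have hd : ‖χ ⬝ᵥ (U *ᵥ χ)‖ ≤ N := by
    refine dot_abs_le U hUnit χ hχstar N (le_of_lt hN0) ?_
    rw [hχχ, hNdef]
    push_cast
    rfl
  have hws : w ⬝ᵥ (U *ᵥ χ) = 0 := by
    rw [Matrix.dotProduct_mulVec, ← Matrix.mulVec_transpose, hUT, hUw,
      dotProduct_comm, hχw]
  have hUuu : U u u = (1 - c) + c * c * (χ ⬝ᵥ (U *ᵥ χ)) := by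
    have e1 : e = w + c • χ := by rw [hwdef]; abel
    have hUe : U *ᵥ e = fun x => U x u := by
      funext x
      simp [Matrix.mulVec, dotProduct, hedef, mul_ite, mul_one, mul_zero,
        Finset.sum_ite_eq']
    have e2 : U u u = e ⬝ᵥ (U *ᵥ e) := by rw [hed, hUe]
    rw [e2]
    conv_lhs => rw [e1]
    rw [Matrix.mulVec_add, Matrix.mulVec_smul, hUw, add_dotProduct,
      dotProduct_add, dotProduct_add, smul_dotProduct,
      smul_dotProduct, dotProduct_smul, dotProduct_smul,
      hww, hws, hχw]
    simp [smul_eq_mul]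
    ring
  have habsc : ‖c‖ = N⁻¹ := by
    rw [hcdef, norm_inv, Complex.norm_natCast, hNdef]
  have habs1 : ‖1 - c‖ = 1 - 1/N := by
    have h0 : (1 : ℂ) - c = ((1 - 1/N : ℝ) : ℂ) := by
      rw [hcdef, hNdef]
      push_cast
      ring
    rw [h0, Complex.norm_real, Real.norm_eq_abs, abs_of_nonneg]
    have : 1/N ≤ 1/3 := by
      apply one_div_le_one_div_of_le <;> linarith
    linarith
  have habs2 : ‖c * c * (χ ⬝ᵥ (U *ᵥ χ))‖ ≤ 1/N := by
    rw [norm_mul, norm_mul, habsc]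
    calc N⁻¹ * N⁻¹ * ‖χ ⬝ᵥ (U *ᵥ χ)‖ ≤ N⁻¹ * N⁻¹ * N := by
          apply mul_le_mul_of_nonneg_left hd
          positivity
      _ = 1/N := by field_simp
  have htri : ‖1 - c‖ ≤ ‖(1 - c) + c * c * (χ ⬝ᵥ (U *ᵥ χ))‖
      + ‖c * c * (χ ⬝ᵥ (U *ᵥ χ))‖ := by
    have h0 : (1 - c) = ((1 - c) + c * c * (χ ⬝ᵥ (U *ᵥ χ))) - c * c * (χ ⬝ᵥ (U *ᵥ χ)) := by ring
    rw [h0]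
    simpa using norm_sub_le ((1 - c) + c * c * (χ ⬝ᵥ (U *ᵥ χ)))
      (c * c * (χ ⬝ᵥ (U *ᵥ χ)))
  rw [hq, hUuu]
  have h2N : 2 / N = 1 / N + 1 / N := by ring
  linarith
end

section
/- For each n ≥ 4, let X = K_n \ e be the complete graph on n vertices with one edge removed, let u and v be the two non-adjacent vertices, let A be the adjacency matrix of X and U(t) = exp(itA). Then pretty good state transfer occurs between u and v: there is a sequence of times (t_k) with |U(t_k)_{u,v}| → 1. -/
open NormedSpace

/-- exp of a scalar multiple of an idempotent. -/
lemma expSmulIdem {A : Type*} [NormedRing A] [NormedAlgebra ℂ A] [CompleteSpace A]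
    (c : ℂ) (P : A) (hP : P * P = P) :
    exp (c • P) = 1 + (Complex.exp c - 1) • P := by
  have hPn : ∀ k : ℕ, P ^ (k + 1) = P := by
    intro k; induction k with
    | zero => simp
    | succ k ih => rw [pow_succ, ih, hP]
  have hpow : ∀ k : ℕ, (c • P) ^ (k + 1) = c ^ (k + 1) • P := by
    intro k; rw [smul_pow, hPn]
  have hsum := NormedSpace.expSeries_summable' (𝕂 := ℂ) (c • P)
  rw [exp_eq_tsum ℂ]
  rw [show (fun x : A => ∑' n : ℕ, ((n).factorial : ℂ)⁻¹ • x ^ n) (c • P)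
      = ∑' n : ℕ, ((n).factorial : ℂ)⁻¹ • (c • P) ^ n from rfl, hsum.tsum_eq_zero_add]
  have h1 : ∀ k : ℕ, ((k + 1).factorial : ℂ)⁻¹ • (c • P) ^ (k + 1)
      = (((k + 1).factorial : ℂ)⁻¹ * c ^ (k + 1)) • P := by
    intro k; rw [hpow, smul_smul]
  simp only [h1, pow_zero, Nat.factorial_zero, Nat.cast_one, inv_one, one_smul]
  have hsc : Summable fun k : ℕ => ((k + 1).factorial : ℂ)⁻¹ * c ^ (k + 1) := by
    have := (NormedSpace.expSeries_summable' (𝕂 := ℂ) c)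
    simpa [smul_eq_mul] using ((summable_nat_add_iff 1).mpr this)
  rw [Summable.tsum_smul_const]
  · congr 1
    have hc := NormedSpace.expSeries_summable' (𝕂 := ℂ) c
    have : Complex.exp c = ∑' k : ℕ, ((k).factorial : ℂ)⁻¹ • c ^ k := by
      rw [Complex.exp_eq_exp_ℂ, exp_eq_tsum ℂ]
    rw [this, hc.tsum_eq_zero_add]
    simp [smul_eq_mul]
  · exact hsc

/-- exp of a scalar multiple of an idempotent matrix. -/
lemma Matrix.expSmulIdem {m : Type*} [Fintype m] [DecidableEq m]
    (c : ℂ) (P : Matrix m m ℂ) (hP : P * P = P) :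
    exp (c • P) = 1 + (Complex.exp c - 1) • P := by
  letI : SeminormedRing (Matrix m m ℂ) := Matrix.linftyOpSemiNormedRing
  letI : NormedRing (Matrix m m ℂ) := Matrix.linftyOpNormedRing
  letI : NormedAlgebra ℂ (Matrix m m ℂ) := Matrix.linftyOpNormedAlgebra
  exact _root_.expSmulIdem c P hP

lemma vecMulVec_mul_vecMulVec' {n : Type*} [Fintype n] (x y z w : n → ℂ) :
    Matrix.vecMulVec x y * Matrix.vecMulVec z w = (∑ i, y i * z i) • Matrix.vecMulVec x w := by
  ext i j
  simp only [Matrix.mul_apply, Matrix.vecMulVec_apply, Matrix.smul_apply, smul_eq_mul,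
    Finset.sum_mul]
  exact Finset.sum_congr rfl fun k _ => by ring

/-- The 0-1 adjacency matrix of `K_n \ e`, the complete graph on `n` vertices with the
single edge `{u, v}` removed: distinct vertices are adjacent unless they are `u` and
`v`. -/
def knMinusE (n : ℕ) (u v : Fin n) : Matrix (Fin n) (Fin n) ℝ :=
  Matrix.of fun x y =>
    if x = y ∨ (x = u ∧ y = v) ∨ (x = v ∧ y = u) then 0 else 1

set_option maxHeartbeats 1600000 in
/-- For each `n ≥ 4`, pretty good state transfer occurs (with respect to the adjacency
matrix) between the two non-adjacent vertices `u` and `v` of `K_n \ e`. -/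
theorem knMinusE_pgst {n : ℕ} (hn : 4 ≤ n) (u v : Fin n) (huv : u ≠ v) :
    ∃ tk : ℕ → ℝ,
      Filter.Tendsto (fun k => ‖qwU (knMinusE n u v) (tk k) u v‖)
        Filter.atTop (nhds 1) := by
  classical
  obtain ⟨nn, hnn⟩ : ∃ x:ℝ, x = (n:ℝ) := ⟨_, rfl⟩
  have hnn4 : (4:ℝ) ≤ nn := by rw [hnn]; exact_mod_cast hn
  have h8 : 8 ≤ (n+1)^2 := by nlinarith
  set D : ℕ := (n+1)^2 - 8 with hD
  have hDcast : (D : ℝ) = (nn+1)^2 - 8 := by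
    rw [hD, Nat.cast_sub h8]; push_cast [hnn]; ring
  -- D is not a square
  have hnsq : ¬ IsSquare D := by
    rintro ⟨m, hm⟩
    have h1 : ((n:ℤ)+1)^2 = (m:ℤ)*m + 8 := by
      have : ((n+1)^2 : ℤ) = (D:ℤ) + 8 := by
        have := Nat.sub_add_cancel h8
        push_cast [hD]
        exact_mod_cast congrArg (Nat.cast (R := ℤ)) this.symm
      rw [this, hm]; push_cast; ring
    set s : ℤ := (n:ℤ)+1 with hs
    have hs5 : (5:ℤ) ≤ s := by rw [hs]; exact_mod_cast Nat.succ_le_succ hn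
    have hm0 : (0:ℤ) ≤ (m:ℤ) := Int.natCast_nonneg m
    have hlt : (m:ℤ) < s := by nlinarith
    have hfac : (s - m) * (s + m) = 8 := by nlinarith
    have h2 : s - (m:ℤ) = 1 := by nlinarith
    have h3 : s + (m:ℤ) = 8 := by nlinarith
    omega
  obtain ⟨r, hrdef⟩ : ∃ x:ℝ, x = Real.sqrt D := ⟨_, rfl⟩
  have hirr : Irrational r := by rw [hrdef]; exact irrational_sqrt_natCast_iff.mpr hnsq
  have hr0 : 0 ≤ r := by rw [hrdef]; exact Real.sqrt_nonneg _
  have hr2 : r^2 = (nn+1)^2 - 8 := by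
    rw [hrdef, Real.sq_sqrt (Nat.cast_nonneg D), hDcast]
  -- scalars
  obtain ⟨θp, hθp⟩ : ∃ x:ℝ, x = (nn - 3 + r)/2 := ⟨_, rfl⟩
  obtain ⟨θm, hθm⟩ : ∃ x:ℝ, x = (nn - 3 - r)/2 := ⟨_, rfl⟩
  obtain ⟨cp, hcp⟩ : ∃ x:ℝ, x = (r - nn - 1)/2 := ⟨_, rfl⟩
  obtain ⟨cm, hcm⟩ : ∃ x:ℝ, x = (-r - nn - 1)/2 := ⟨_, rfl⟩
  obtain ⟨sp, hsp⟩ : ∃ x:ℝ, x = 2 + cp := ⟨_, rfl⟩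
  obtain ⟨sm, hsm⟩ : ∃ x:ℝ, x = 2 + cm := ⟨_, rfl⟩
  obtain ⟨Np, hNp⟩ : ∃ x:ℝ, x = 4*nn + 8*cp + 2*cp^2 := ⟨_, rfl⟩
  obtain ⟨Nm, hNm⟩ : ∃ x:ℝ, x = 4*nn + 8*cm + 2*cm^2 := ⟨_, rfl⟩
  have hNp0 : Np ≠ 0 := by
    have : 0 < Np := by rw [hNp]; nlinarith [sq_nonneg (cp+2)]
    exact this.ne'
  have hNm0 : Nm ≠ 0 := by
    have : 0 < Nm := by rw [hNm]; nlinarith [sq_nonneg (cm+2)]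
    exact this.ne'
  have T1 : (θp+1)*4/Np + (θm+1)*4/Nm = 1 := by
    rw [div_add_div _ _ hNp0 hNm0, div_eq_one_iff_eq (mul_ne_zero hNp0 hNm0)]
    simp only [hNp, hNm, hθp, hθm, hcp, hcm]
    linear_combination ((1:ℝ)/4 - r^2/4 - 3/2*nn + nn^2/4) * hr2
  have T2 : (θp+1)*(2*sp)/Np + (θm+1)*(2*sm)/Nm = 1 := by
    rw [div_add_div _ _ hNp0 hNm0, div_eq_one_iff_eq (mul_ne_zero hNp0 hNm0)]
    simp only [hNp, hNm, hsp, hsm, hθp, hθm, hcp, hcm]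
    linear_combination (-(1:ℝ)/4 + r^2/4 - 3/2*nn + 3/4*nn^2) * hr2
  have T3 : (θp+1)*sp^2/Np + (θm+1)*sm^2/Nm = 1/2 := by
    rw [div_add_div _ _ hNp0 hNm0, div_eq_div_iff (mul_ne_zero hNp0 hNm0) two_ne_zero]
    simp only [hNp, hNm, hsp, hsm, hθp, hθm, hcp, hcm]
    linear_combination ((1:ℝ)/2 - r^2/2 - 13/4*nn + nn*r^2/4 + 2*nn^2 - nn^3/4) * hr2
  have T4 : sp^2/Np + sm^2/Nm = 1/2 := by
    rw [div_add_div _ _ hNp0 hNm0, div_eq_div_iff (mul_ne_zero hNp0 hNm0) two_ne_zero]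
    simp only [hNp, hNm, hsp, hsm, hcp, hcm]
    linear_combination (-(25:ℝ)/4 + r^2/4 + 7/2*nn - nn^2/4) * hr2
  -- complex casts of the identities
  have T1C := congrArg (Complex.ofReal) T1
  have T2C := congrArg (Complex.ofReal) T2
  have T3C := congrArg (Complex.ofReal) T3
  have T4C := congrArg (Complex.ofReal) T4
  push_cast at T1C T2C T3C T4C
  have hNp0C : ((Np:ℝ):ℂ) ≠ 0 := by exact_mod_cast hNp0
  have hNm0C : ((Nm:ℝ):ℂ) ≠ 0 := by exact_mod_cast hNm0
  -- vectors
  obtain ⟨av, hav⟩ : ∃ f : Fin n → ℂ, f = fun i => if i = u ∨ i = v then 1 else 0 := ⟨_, rfl⟩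
  obtain ⟨dv, hdv⟩ : ∃ f : Fin n → ℂ, f = fun i => if i = u then 1 else if i = v then -1 else 0 := ⟨_, rfl⟩
  obtain ⟨wp, hwp⟩ : ∃ f : Fin n → ℂ, f = fun i => 2 + (cp:ℂ) * av i := ⟨_, rfl⟩
  obtain ⟨wm, hwm⟩ : ∃ f : Fin n → ℂ, f = fun i => 2 + (cm:ℂ) * av i := ⟨_, rfl⟩
  have hsum_av : ∑ i, av i = 2 := by
    have h : ∀ i : Fin n, av i = (if i = u then (1:ℂ) else 0) + (if i = v then 1 else 0) := by
      intro i
      by_cases h1 : i = u <;> by_cases h2 : i = v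
      · exact absurd (h1.symm.trans h2) huv
      all_goals simp [hav, h1, h2, huv, (Ne.symm huv : ¬ v = u)]
    rw [Finset.sum_congr rfl fun i _ => h i, Finset.sum_add_distrib]
    simp
    norm_num
  have hsum_dv : ∑ i, dv i = 0 := by
    have h : ∀ i : Fin n, dv i = (if i = u then (1:ℂ) else 0) - (if i = v then 1 else 0) := by
      intro i
      by_cases h1 : i = u <;> by_cases h2 : i = v
      · exact absurd (h1.symm.trans h2) huv
      all_goals simp [hdv, h1, h2, huv, (Ne.symm huv : ¬ v = u)]
    rw [Finset.sum_congr rfl fun i _ => h i, Finset.sum_sub_distrib]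
    simp
  have hcard : ∑ _i : Fin n, (4:ℂ) = 4*(n:ℂ) := by
    rw [Finset.sum_const]
    simp [nsmul_eq_mul]; ring
  have hNpC : ((Np:ℝ):ℂ) = 4*(n:ℂ) + 8*(cp:ℂ) + 2*(cp:ℂ)^2 := by
    rw [hNp, hnn]; push_cast; ring
  have hNmC : ((Nm:ℝ):ℂ) = 4*(n:ℂ) + 8*(cm:ℂ) + 2*(cm:ℂ)^2 := by
    rw [hNm, hnn]; push_cast; ring
  -- dot products
  have hdot : ∀ c1 c2 : ℂ, ∑ i, (2 + c1 * av i) * (2 + c2 * av i)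
      = 4*(n:ℂ) + 2*(2*c1 + 2*c2 + c1*c2) := by
    intro c1 c2
    have h : ∀ i : Fin n, (2 + c1 * av i) * (2 + c2 * av i)
        = 4 + (2*c1 + 2*c2 + c1*c2) * av i := by
      intro i
      by_cases hi : i = u ∨ i = v
      · simp only [hav]; rw [if_pos hi]; ring
      · simp only [hav]; rw [if_neg hi]; ring
    rw [Finset.sum_congr rfl fun i _ => h i, Finset.sum_add_distrib, ← Finset.mul_sum,
      hsum_av, hcard]
    ring
  have hsum_pp : ∑ i, wp i * wp i = ((Np:ℝ):ℂ) := by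
    simp only [hwp]; rw [hdot, hNpC]; ring
  have hsum_mm : ∑ i, wm i * wm i = ((Nm:ℝ):ℂ) := by
    simp only [hwm]; rw [hdot, hNmC]; ring
  have hcpcm : (cp:ℂ) + (cm:ℂ) = -((n:ℂ)+1) ∧ (cp:ℂ) * (cm:ℂ) = 2 := by
    constructor
    · rw [hcp, hcm, hnn]; push_cast; ring
    · have : cp * cm = 2 := by
        rw [hcp, hcm]; field_simp; linear_combination -hr2
      exact_mod_cast congrArg Complex.ofReal this
  have hsum_pm : ∑ i, wp i * wm i = 0 := by
    simp only [hwp, hwm]; rw [hdot]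
    linear_combination 4*hcpcm.1 + 2*hcpcm.2
  have hsum_mp : ∑ i, wm i * wp i = 0 := by
    simp only [hwm, hwp]; rw [hdot]
    linear_combination 4*hcpcm.1 + 2*hcpcm.2
  -- dv dot products
  have hdvav : ∀ (c:ℂ) (i : Fin n), dv i * (2 + c * av i) = (2+c) * dv i := by
    intro c i
    by_cases h1 : i = u <;> by_cases h2 : i = v
    · exact absurd (h1.symm.trans h2) huv
    all_goals (simp [hdv, hav, h1, h2, huv, (Ne.symm huv : ¬ v = u)]; try ring)
  have havdv : ∀ (c:ℂ) (i : Fin n), (2 + c * av i) * dv i = (2+c) * dv i := by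
    intro c i; rw [mul_comm, hdvav]
  have hdvdv : ∀ i : Fin n, dv i * dv i = av i := by
    intro i
    by_cases h1 : i = u <;> by_cases h2 : i = v
    · exact absurd (h1.symm.trans h2) huv
    all_goals simp [hdv, hav, h1, h2, huv, (Ne.symm huv : ¬ v = u)]
  have hsum_dwp : ∑ i, dv i * wp i = 0 := by
    simp only [hwp]
    rw [Finset.sum_congr rfl fun i _ => hdvav (cp:ℂ) i, ← Finset.mul_sum, hsum_dv, mul_zero]
  have hsum_dwm : ∑ i, dv i * wm i = 0 := by
    simp only [hwm]
    rw [Finset.sum_congr rfl fun i _ => hdvav (cm:ℂ) i, ← Finset.mul_sum, hsum_dv, mul_zero]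
  have hsum_wpd : ∑ i, wp i * dv i = 0 := by
    simp only [hwp]
    rw [Finset.sum_congr rfl fun i _ => havdv (cp:ℂ) i, ← Finset.mul_sum, hsum_dv, mul_zero]
  have hsum_wmd : ∑ i, wm i * dv i = 0 := by
    simp only [hwm]
    rw [Finset.sum_congr rfl fun i _ => havdv (cm:ℂ) i, ← Finset.mul_sum, hsum_dv, mul_zero]
  have hsum_dd : ∑ i, dv i * dv i = 2 := by
    rw [Finset.sum_congr rfl fun i _ => hdvdv i, hsum_av]
  -- matrices
  obtain ⟨Xp, hXp⟩ : ∃ M : Matrix (Fin n) (Fin n) ℂ, M = Matrix.vecMulVec wp wp := ⟨_, rfl⟩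
  obtain ⟨Xm, hXm⟩ : ∃ M : Matrix (Fin n) (Fin n) ℂ, M = Matrix.vecMulVec wm wm := ⟨_, rfl⟩
  obtain ⟨Xd, hXd⟩ : ∃ M : Matrix (Fin n) (Fin n) ℂ, M = Matrix.vecMulVec dv dv := ⟨_, rfl⟩
  obtain ⟨Pp, hPpd⟩ : ∃ M : Matrix (Fin n) (Fin n) ℂ, M = ((Np:ℝ):ℂ)⁻¹ • Xp := ⟨_, rfl⟩
  obtain ⟨Pm, hPmd⟩ : ∃ M : Matrix (Fin n) (Fin n) ℂ, M = ((Nm:ℝ):ℂ)⁻¹ • Xm := ⟨_, rfl⟩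
  obtain ⟨P0, hP0d⟩ : ∃ M : Matrix (Fin n) (Fin n) ℂ, M = (2:ℂ)⁻¹ • Xd := ⟨_, rfl⟩
  obtain ⟨S, hSd⟩ : ∃ M : Matrix (Fin n) (Fin n) ℂ, M = P0 + Pp + Pm := ⟨_, rfl⟩
  obtain ⟨Q, hQd⟩ : ∃ M : Matrix (Fin n) (Fin n) ℂ, M = 1 - S := ⟨_, rfl⟩
  -- products of the X's
  have hXpXp : Xp * Xp = ((Np:ℝ):ℂ) • Xp := by
    rw [hXp, vecMulVec_mul_vecMulVec', hsum_pp]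
  have hXmXm : Xm * Xm = ((Nm:ℝ):ℂ) • Xm := by
    rw [hXm, vecMulVec_mul_vecMulVec', hsum_mm]
  have hXdXd : Xd * Xd = (2:ℂ) • Xd := by
    rw [hXd, vecMulVec_mul_vecMulVec', hsum_dd]
  have hXpXm : Xp * Xm = 0 := by
    rw [hXp, hXm, vecMulVec_mul_vecMulVec', hsum_pm, zero_smul]
  have hXmXp : Xm * Xp = 0 := by
    rw [hXm, hXp, vecMulVec_mul_vecMulVec', hsum_mp, zero_smul]
  have hXpXd : Xp * Xd = 0 := by
    rw [hXp, hXd, vecMulVec_mul_vecMulVec', hsum_wpd, zero_smul]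
  have hXdXp : Xd * Xp = 0 := by
    rw [hXd, hXp, vecMulVec_mul_vecMulVec', hsum_dwp, zero_smul]
  have hXmXd : Xm * Xd = 0 := by
    rw [hXm, hXd, vecMulVec_mul_vecMulVec', hsum_wmd, zero_smul]
  have hXdXm : Xd * Xm = 0 := by
    rw [hXd, hXm, vecMulVec_mul_vecMulVec', hsum_dwm, zero_smul]
  -- projections
  have hPpPp : Pp * Pp = Pp := by
    rw [hPpd, smul_mul_assoc, mul_smul_comm, hXpXp, smul_smul, smul_smul, mul_assoc,
      inv_mul_cancel₀ hNp0C, mul_one]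
  have hPmPm : Pm * Pm = Pm := by
    rw [hPmd, smul_mul_assoc, mul_smul_comm, hXmXm, smul_smul, smul_smul, mul_assoc,
      inv_mul_cancel₀ hNm0C, mul_one]
  have hP0P0 : P0 * P0 = P0 := by
    rw [hP0d, smul_mul_assoc, mul_smul_comm, hXdXd, smul_smul, smul_smul, mul_assoc,
      inv_mul_cancel₀ (two_ne_zero : (2:ℂ) ≠ 0), mul_one]
  have hPpPm : Pp * Pm = 0 := by
    rw [hPpd, hPmd, smul_mul_assoc, mul_smul_comm, hXpXm, smul_zero, smul_zero]
  have hPmPp : Pm * Pp = 0 := by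
    rw [hPmd, hPpd, smul_mul_assoc, mul_smul_comm, hXmXp, smul_zero, smul_zero]
  have hPpP0 : Pp * P0 = 0 := by
    rw [hPpd, hP0d, smul_mul_assoc, mul_smul_comm, hXpXd, smul_zero, smul_zero]
  have hP0Pp : P0 * Pp = 0 := by
    rw [hP0d, hPpd, smul_mul_assoc, mul_smul_comm, hXdXp, smul_zero, smul_zero]
  have hPmP0 : Pm * P0 = 0 := by
    rw [hPmd, hP0d, smul_mul_assoc, mul_smul_comm, hXmXd, smul_zero, smul_zero]
  have hP0Pm : P0 * Pm = 0 := by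
    rw [hP0d, hPmd, smul_mul_assoc, mul_smul_comm, hXdXm, smul_zero, smul_zero]
  have hSS : S * S = S := by
    rw [hSd]
    simp only [add_mul, mul_add, hP0P0, hPpPp, hPmPm, hPpPm, hPmPp, hP0Pp, hPpP0, hP0Pm, hPmP0,
      add_zero, zero_add]
  have hSQ : S * Q = 0 := by
    rw [hQd, mul_sub, mul_one, hSS, sub_self]
  have hQQ : Q * Q = Q := by
    nth_rewrite 1 [hQd]
    rw [sub_mul, one_mul, hSQ, sub_zero]
  have hPpQ : Pp * Q = 0 := by
    rw [hQd, hSd, mul_sub, mul_one, mul_add, mul_add, hPpP0, hPpPp, hPpPm]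
    simp
  have hQPp : Q * Pp = 0 := by
    rw [hQd, hSd, sub_mul, one_mul, add_mul, add_mul, hP0Pp, hPpPp, hPmPp]
    simp
  have hPmQ : Pm * Q = 0 := by
    rw [hQd, hSd, mul_sub, mul_one, mul_add, mul_add, hPmP0, hPmPp, hPmPm]
    simp
  have hQPm : Q * Pm = 0 := by
    rw [hQd, hSd, sub_mul, one_mul, add_mul, add_mul, hP0Pm, hPpPm, hPmPm]
    simp
  -- the spectral decomposition
  have H0 : (knMinusE n u v).map (↑· : ℝ → ℂ) = (θp:ℂ) • Pp + (θm:ℂ) • Pm - Q := by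
    rw [hQd, hSd, hP0d, hPpd, hPmd, hXd, hXp, hXm]
    ext x y
    simp only [Matrix.map_apply, knMinusE, Matrix.of_apply, Matrix.sub_apply, Matrix.add_apply,
      Matrix.smul_apply, Matrix.one_apply, Matrix.vecMulVec_apply, smul_eq_mul, hwp, hwm, hdv,
      hav]
    have hspC : ((sp:ℝ):ℂ) = 2 + ((cp:ℝ):ℂ) := by
      have := congrArg Complex.ofReal hsp; push_cast at this; exact this
    have hsmC : ((sm:ℝ):ℂ) = 2 + ((cm:ℝ):ℂ) := by
      have := congrArg Complex.ofReal hsm; push_cast at this; exact this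
    rw [hspC, hsmC] at T2C T3C T4C
    rcases eq_or_ne x y with hxy | hxy
    · obtain rfl := hxy
      rcases eq_or_ne x u with hxu | hxu
      · obtain rfl := hxu.symm
        simp [huv, (Ne.symm huv : ¬ v = u)]
        push_cast
        first
          | linear_combination T3C | linear_combination -T3C
      · rcases eq_or_ne x v with hxv | hxv
        · obtain rfl := hxv.symm
          simp [hxu, huv, (Ne.symm huv : ¬ v = u)]
          push_cast
          first
            | linear_combination T3C | linear_combination -T3C
        · simp [hxu, hxv]
          push_cast
          first
            | linear_combination T1C | linear_combination -T1C
    · rcases eq_or_ne x u with hxu | hxu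
      · obtain rfl := hxu.symm
        rcases eq_or_ne y v with hyv | hyv
        · obtain rfl := hyv.symm
          simp [hxy, huv, (Ne.symm huv : ¬ v = u)]
          push_cast
          first
            | linear_combination T3C | linear_combination -T3C
        · simp [hxy, hyv, (Ne.symm hxy : ¬ y = u), huv, (Ne.symm huv : ¬ v = u)]
          push_cast
          first
            | linear_combination T2C | linear_combination -T2C
      · rcases eq_or_ne x v with hxv | hxv
        · obtain rfl := hxv.symm
          rcases eq_or_ne y u with hyu | hyu
          · obtain rfl := hyu.symm
            simp [hxy, huv, (Ne.symm huv : ¬ v = u)]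
            push_cast
            first
              | linear_combination T3C | linear_combination -T3C
          · simp [hxy, hyu, (Ne.symm hxy : ¬ y = v), huv, (Ne.symm huv : ¬ v = u)]
            push_cast
            first
              | linear_combination T2C | linear_combination -T2C
        · rcases eq_or_ne y u with hyu | hyu
          · obtain rfl := hyu.symm
            simp [hxy, hxu, hxv, huv, (Ne.symm huv : ¬ v = u)]
            push_cast
            first
              | linear_combination T2C | linear_combination -T2C
          · rcases eq_or_ne y v with hyv | hyv
            · obtain rfl := hyv.symm
              simp [hxy, hxu, hxv, huv, (Ne.symm huv : ¬ v = u)]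
              push_cast
              first
                | linear_combination T2C | linear_combination -T2C
            · simp [hxy, hxu, hxv, hyu, hyv]
              push_cast
              first
                | linear_combination T1C | linear_combination -T1C
  -- projections' (u,v) entries
  have hspC : ((sp:ℝ):ℂ) = 2 + ((cp:ℝ):ℂ) := by
    have := congrArg Complex.ofReal hsp; push_cast at this; exact this
  have hsmC : ((sm:ℝ):ℂ) = 2 + ((cm:ℝ):ℂ) := by
    have := congrArg Complex.ofReal hsm; push_cast at this; exact this
  rw [hspC, hsmC] at T4C
  obtain ⟨ppC, hppC⟩ : ∃ z:ℂ, z = (2+((cp:ℝ):ℂ))^2/((Np:ℝ):ℂ) := ⟨_, rfl⟩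
  obtain ⟨pmC, hpmC⟩ : ∃ z:ℂ, z = (2+((cm:ℝ):ℂ))^2/((Nm:ℝ):ℂ) := ⟨_, rfl⟩
  have hppm : ppC + pmC = 1/2 := by rw [hppC, hpmC]; exact T4C
  -- decomposition of (I*t) • A'
  have hdecomp : ∀ t : ℝ, (Complex.I * (t:ℂ)) • ((knMinusE n u v).map (↑· : ℝ → ℂ))
      = (Complex.I * t * (θp:ℂ)) • Pp
        + ((Complex.I * t * (θm:ℂ)) • Pm + (-(Complex.I * t)) • Q) := by
    intro t
    rw [H0, smul_sub, smul_add, smul_smul, smul_smul, neg_smul]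
    abel
  have hcPpPm : Commute Pp Pm := by unfold Commute SemiconjBy; rw [hPpPm, hPmPp]
  have hcPpQ : Commute Pp Q := by unfold Commute SemiconjBy; rw [hPpQ, hQPp]
  have hcPmQ : Commute Pm Q := by unfold Commute SemiconjBy; rw [hPmQ, hQPm]
  have hprod : ∀ a b c : ℂ, (1 + a • Pp) * ((1 + b • Pm) * (1 + c • Q))
      = 1 + a • Pp + b • Pm + c • Q := by
    intro a b c
    simp only [mul_add, add_mul, mul_one, one_mul, smul_mul_assoc, mul_smul_comm,
      hPpPm, hPpQ, hPmQ, smul_zero, add_zero]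
    try abel
  have hU : ∀ t : ℝ, qwU (knMinusE n u v) t
      = 1 + (Complex.exp (Complex.I*t*(θp:ℂ)) - 1) • Pp
          + (Complex.exp (Complex.I*t*(θm:ℂ)) - 1) • Pm
          + (Complex.exp (-(Complex.I*t)) - 1) • Q := by
    intro t
    rw [qwU, hdecomp t, Matrix.exp_add_of_commute _ _
        (((hcPpPm.smul_left _).smul_right _).add_right ((hcPpQ.smul_left _).smul_right _)),
      Matrix.exp_add_of_commute _ _ ((hcPmQ.smul_left _).smul_right _),
      Matrix.expSmulIdem _ _ hPpPp, Matrix.expSmulIdem _ _ hPmPm, Matrix.expSmulIdem _ _ hQQ,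
      hprod]
  have hEntry : ∀ t : ℝ, qwU (knMinusE n u v) t u v
      = Complex.exp (Complex.I*t*(θp:ℂ)) * ppC
        + Complex.exp (Complex.I*t*(θm:ℂ)) * pmC - 1/2 := by
    intro t
    rw [hU t]
    simp only [Matrix.add_apply, Matrix.smul_apply, Matrix.one_apply_ne huv, smul_eq_mul,
      hQd, hSd, hP0d, hPpd, hPmd, hXp, hXm, hXd, Matrix.sub_apply, Matrix.one_apply_ne huv,
      Matrix.vecMulVec_apply, hwp, hwm, hdv, hav]
    simp only [true_or, or_true, if_true]
    simp only [if_neg (Ne.symm huv : ¬ v = u)]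
    linear_combination (Complex.exp (-(Complex.I*t)) - Complex.exp (Complex.I*t*(θp:ℂ))) * hppC
      + (Complex.exp (-(Complex.I*t)) - Complex.exp (Complex.I*t*(θm:ℂ))) * hpmC
      - Complex.exp (-(Complex.I*t)) * hppm
  -- θp is irrational
  have hirrθ : Irrational θp := by
    have h1 : Irrational ((((n:ℤ) - 3 : ℤ):ℝ) + r) := hirr.intCast_add _
    have h2 : Irrational (((((n:ℤ) - 3 : ℤ):ℝ) + r) / ((2:ℤ):ℝ)) := h1.div_intCast two_ne_zero
    have he : θp = ((((n:ℤ) - 3 : ℤ):ℝ) + r) / ((2:ℤ):ℝ) := by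
      rw [hθp, hnn]; push_cast; ring
    rw [he]; exact h2
  -- the subgroup generated by θp and 1 is dense
  have hdense : Dense ((AddSubgroup.closure ({θp, 1} : Set ℝ) : AddSubgroup ℝ) : Set ℝ) := by
    rcases AddSubgroup.dense_or_cyclic (AddSubgroup.closure ({θp, 1} : Set ℝ)) with h | ⟨a, ha⟩
    · exact h
    · exfalso
      have hθG : θp ∈ AddSubgroup.closure ({θp, 1} : Set ℝ) :=
        AddSubgroup.subset_closure (by simp)
      have h1G : (1:ℝ) ∈ AddSubgroup.closure ({θp, 1} : Set ℝ) :=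
        AddSubgroup.subset_closure (by simp)
      rw [ha, AddSubgroup.mem_closure_singleton] at hθG h1G
      obtain ⟨m, hm⟩ := hθG
      obtain ⟨k, hk⟩ := h1G
      rw [zsmul_eq_mul] at hk hm
      have hk0 : (k:ℝ) ≠ 0 := by
        intro h0; rw [h0, zero_mul] at hk; exact one_ne_zero hk.symm
      apply hirrθ
      refine ⟨(m:ℚ)/(k:ℚ), ?_⟩
      push_cast
      rw [div_eq_iff hk0]
      linear_combination (k:ℝ)*hm - (m:ℝ)*hk
  -- choose group elements approaching 1/2
  have hpos : ∀ k : ℕ, (0:ℝ) < 1/(k+1) := fun k => by positivity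
  choose g hgG hgd using fun k : ℕ => hdense.exists_dist_lt (1/2 : ℝ) (hpos k)
  choose A B hAB using fun k : ℕ => (AddSubgroup.mem_closure_pair).mp (hgG k)
  have hgt : Filter.Tendsto g Filter.atTop (nhds (1/2)) := by
    rw [tendsto_iff_dist_tendsto_zero]
    refine squeeze_zero (fun k => dist_nonneg) (fun k => ?_)
      tendsto_one_div_add_atTop_nhds_zero_nat
    rw [dist_comm]
    exact (hgd k).le
  obtain ⟨tk, htk⟩ : ∃ f : ℕ → ℝ, f = fun k => 2*Real.pi*((A k : ℝ)) := ⟨_, rfl⟩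
  have hab : ∀ k, (A k : ℝ)*θp + (B k : ℝ) = g k := by
    intro k
    have := hAB k; push_cast [zsmul_eq_mul] at this
    linarith [this]
  have hE1 : ∀ k, Complex.exp (Complex.I * (tk k) * (θp:ℂ))
      = Complex.exp (((2*Real.pi*(g k) : ℝ):ℂ) * Complex.I) := by
    intro k
    have habC : ((A k:ℤ):ℂ)*((θp:ℝ):ℂ) + ((B k:ℤ):ℂ) = ((g k : ℝ):ℂ) := by
      exact_mod_cast congrArg Complex.ofReal (hab k)
    have h : Complex.I * (tk k) * (θp:ℂ)
        = ((2*Real.pi*(g k):ℝ):ℂ) * Complex.I + ((-(B k) : ℤ):ℂ) * (2*(Real.pi:ℂ)*Complex.I) := by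
      rw [htk]
      push_cast
      linear_combination (2*(Real.pi:ℂ)*Complex.I) * habC
    rw [h, Complex.exp_add]
    rw [show ((-(B k) : ℤ):ℂ) * (2*(Real.pi:ℂ)*Complex.I)
        = ((-(B k) : ℤ):ℂ) * (2*(Real.pi:ℝ)*Complex.I) from by push_cast; ring]
    rw [Complex.exp_int_mul_two_pi_mul_I, mul_one]
  have hlimE1 : Filter.Tendsto (fun k => Complex.exp (Complex.I * (tk k) * (θp:ℂ)))
      Filter.atTop (nhds (-1)) := by
    have hcont : Continuous fun x : ℝ => Complex.exp (((2*Real.pi*x : ℝ):ℂ) * Complex.I) := by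
      fun_prop
    have h2 := (hcont.continuousAt (x := (1/2:ℝ))).tendsto.comp hgt
    have h12 : Complex.exp (((2*Real.pi*(1/2:ℝ) : ℝ):ℂ) * Complex.I) = -1 := by
      rw [show (2*Real.pi*(1/2:ℝ)) = Real.pi from by ring]
      exact Complex.exp_pi_mul_I
    rw [h12] at h2
    exact Filter.Tendsto.congr (fun k => (hE1 k).symm) h2
  have hθpm : θp + θm = nn - 3 := by rw [hθp, hθm]; ring
  have hpmC : ((θp:ℝ):ℂ) + ((θm:ℝ):ℂ) = ((n:ℂ)) - 3 := by
    rw [hnn] at hθpm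
    have := congrArg Complex.ofReal hθpm; push_cast at this; exact this
  have hE2 : ∀ k, Complex.exp (Complex.I * (tk k) * (θm:ℂ))
      = (Complex.exp (Complex.I * (tk k) * (θp:ℂ)))⁻¹ := by
    intro k
    have h : Complex.I * (tk k) * (θm:ℂ)
        = ((A k * ((n:ℤ)-3) : ℤ):ℂ) * (2*(Real.pi:ℝ)*Complex.I)
          - Complex.I * (tk k) * (θp:ℂ) := by
      rw [htk]
      push_cast
      linear_combination (Complex.I*2*(Real.pi:ℂ)*((A k : ℤ):ℂ)) * hpmC
    rw [h, Complex.exp_sub, Complex.exp_int_mul_two_pi_mul_I, one_div]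
  have hlimE2 : Filter.Tendsto (fun k => Complex.exp (Complex.I * (tk k) * (θm:ℂ)))
      Filter.atTop (nhds (-1)) := by
    have h2 := hlimE1.inv₀ (by norm_num)
    rw [show ((-1:ℂ))⁻¹ = -1 from by norm_num] at h2
    exact Filter.Tendsto.congr (fun k => (hE2 k).symm) h2
  -- conclusion
  refine ⟨tk, ?_⟩
  have hamp : Filter.Tendsto (fun k => qwU (knMinusE n u v) (tk k) u v)
      Filter.atTop (nhds (-1)) := by
    have hlim := ((hlimE1.mul_const ppC).add (hlimE2.mul_const pmC)).sub
      (tendsto_const_nhds (x := (1/2 : ℂ)))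
    rw [show (-1:ℂ)*ppC + (-1)*pmC - 1/2 = -1 from by linear_combination -hppm] at hlim
    exact Filter.Tendsto.congr (fun k => (hEntry (tk k)).symm) hlim
  have habs := (continuous_norm.tendsto (-1)).comp hamp
  simpa [Function.comp_def] using habs
end

section
/- Let m ≥ 3 be an integer, let Y be a graph with real symmetric adjacency matrix A(Y), and let v be a vertex of Y such that |U_{A(Y)}(t)_{v,v}| ≥ C for all t, where C > 1/(m−1). Let B = A(K_m) ⊗ A(Y) be the adjacency matrix of the direct product K_m × Y (Kronecker product of the adjacency matrix of the complete graph K_m with A(Y)). Then for every vertex u of K_m and all t, |U_B(t)_{(u,v),(u,v)}| ≥ C − (C+1)/m; in particular (u,v) is (C − (C+1)/m)-sedentary in K_m × Y. -/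
set_option maxHeartbeats 1000000

open Kronecker

/-- The adjacency matrix `J_m - I_m` of the complete graph `K_m`. -/
def completeAdj (m : ℕ) : Matrix (Fin m) (Fin m) ℝ :=
  Matrix.of fun i j => if i = j then 0 else 1

section Aux

open NormedSpace Nat
open scoped Matrix

variable {n p : Type*} [Fintype n] [DecidableEq n] [Fintype p] [DecidableEq p]

lemma kron_pow_succ (P : Matrix n n ℂ) (hP : P * P = P) (B : Matrix p p ℂ) :
    ∀ k : ℕ, (P ⊗ₖ B) ^ (k + 1) = P ⊗ₖ (B ^ (k + 1))
  | 0 => by simp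
  | (k+1) => by
      have ih := kron_pow_succ P hP B k
      calc (P ⊗ₖ B) ^ (k+1+1) = (P ⊗ₖ B) ^ (k+1) * (P ⊗ₖ B) := pow_succ _ _
        _ = (P ⊗ₖ (B ^ (k+1))) * (P ⊗ₖ B) := by rw [ih]
        _ = P ⊗ₖ (B ^ (k+1+1)) := by rw [← Matrix.mul_kronecker_mul, hP, ← pow_succ]

lemma exp_kron_idem (P : Matrix n n ℂ) (hP : P * P = P) (B : Matrix p p ℂ) :
    exp (P ⊗ₖ B) = 1 + P ⊗ₖ (exp B - 1) := by
  letI : SeminormedRing (Matrix p p ℂ) := Matrix.linftyOpSemiNormedRing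
  letI : NormedRing (Matrix p p ℂ) := Matrix.linftyOpNormedRing
  letI : NormedAlgebra ℂ (Matrix p p ℂ) := Matrix.linftyOpNormedAlgebra
  letI : NormedRing (Matrix (n × p) (n × p) ℂ) := Matrix.linftyOpNormedRing
  letI : NormedAlgebra ℂ (Matrix (n × p) (n × p) ℂ) := Matrix.linftyOpNormedAlgebra
  have hsum : Summable (fun k : ℕ => ((k ! : ℂ))⁻¹ • B ^ k) := expSeries_summable' (𝕂 := ℂ) B
  have hsum' : Summable (fun k : ℕ => (((k+1)! : ℂ))⁻¹ • (B ^ (k+1))) :=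
    (summable_nat_add_iff 1).2 hsum
  have hsumK : Summable (fun k : ℕ => ((k ! : ℂ))⁻¹ • (P ⊗ₖ B) ^ k) :=
    expSeries_summable' (𝕂 := ℂ) (P ⊗ₖ B)
  let L : Matrix p p ℂ →ₗ[ℂ] Matrix (n × p) (n × p) ℂ :=
    { toFun := fun X => P ⊗ₖ X
      map_add' := fun X Y => Matrix.kronecker_add P X Y
      map_smul' := fun c X => Matrix.kronecker_smul c P X }
  let Lc : Matrix p p ℂ →L[ℂ] Matrix (n × p) (n × p) ℂ :=
    ⟨L, LinearMap.continuous_of_finiteDimensional L⟩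
  have hBexp : (∑' k : ℕ, (((k+1)! : ℂ))⁻¹ • (B ^ (k+1))) = exp B - 1 := by
    have h0 := Summable.tsum_eq_zero_add hsum
    simp only [exp_eq_tsum (𝕂 := ℂ)]; rw [h0]
    simp
  have hterm : ∀ k : ℕ, (((k+1)! : ℂ))⁻¹ • (P ⊗ₖ B) ^ (k+1)
      = Lc ((((k+1)! : ℂ))⁻¹ • (B ^ (k+1))) := by
    intro k
    rw [kron_pow_succ P hP B k]
    simp [Lc, L, Matrix.kronecker_smul]
  have hKexp : exp (P ⊗ₖ B) = ∑' k : ℕ, ((k ! : ℂ))⁻¹ • ((P ⊗ₖ B) ^ k) := by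
    simp only [exp_eq_tsum (𝕂 := ℂ)]
  rw [hKexp, Summable.tsum_eq_zero_add hsumK]
  simp only [hterm]
  rw [← Lc.map_tsum hsum', hBexp]
  simp [Lc, L]

lemma qwU_diag_abs_le_one {V : Type*} [Fintype V] [DecidableEq V] (A : Matrix V V ℝ)
    (hA : A.IsSymm) (s : ℝ) (v : V) : ‖qwU A s v v‖ ≤ 1 := by
  set Ac := A.map (↑· : ℝ → ℂ) with hAc
  set X := (Complex.I * s) • Ac with hX
  have hXh : Xᴴ = -X := by
    ext i j
    simp only [Matrix.conjTranspose_apply, Matrix.neg_apply, hX, Matrix.smul_apply, hAc,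
      Matrix.map_apply, smul_eq_mul, star_mul', Complex.star_def, map_mul, Complex.conj_I,
      Complex.conj_ofReal, hA.apply i j]
    ring_nf
  have h1 : (qwU A s)ᴴ = exp (-X) := by
    rw [qwU, ← Matrix.exp_conjTranspose, hXh]
  have hU : qwU A s * (qwU A s)ᴴ = 1 := by
    rw [h1, qwU, ← hAc, ← hX, ← Matrix.exp_add_of_commute X (-X) (Commute.neg_right (Commute.refl X)),
      add_neg_cancel, exp_zero]
  have h2 : ∑ k, Complex.normSq (qwU A s v k) = 1 := by
    have h3 := congrFun (congrFun hU v) v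
    rw [Matrix.mul_apply] at h3
    simp only [Matrix.conjTranspose_apply, Matrix.one_apply_eq] at h3
    have h4 : ∀ k, qwU A s v k * star (qwU A s v k) = (Complex.normSq (qwU A s v k) : ℂ) := by
      intro k; rw [Complex.star_def, Complex.mul_conj]
    simp only [h4] at h3
    exact_mod_cast h3
  have h5 : Complex.normSq (qwU A s v v) ≤ 1 := by
    rw [← h2]
    exact Finset.single_le_sum (fun k _ => Complex.normSq_nonneg _) (Finset.mem_univ v)
  rw [Complex.norm_def]
  calc Real.sqrt (Complex.normSq (qwU A s v v)) ≤ Real.sqrt 1 := Real.sqrt_le_sqrt h5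
    _ = 1 := Real.sqrt_one

end Aux

open NormedSpace Nat in
open scoped Matrix in
/-- If `m ≥ 3` and the vertex `v` of `Y` is `C`-sedentary with `C > 1/(m-1)`, then every
vertex `(u, v)` of the direct product `K_m × Y` (adjacency matrix the Kronecker product
`A(K_m) ⊗ A(Y)`) is `(C - (C+1)/m)`-sedentary. -/
theorem direct_product_complete_sedentary {m : ℕ} (hm : 3 ≤ m)
    {V : Type*} [Fintype V] [DecidableEq V] (A : Matrix V V ℝ) (hA : A.IsSymm)
    (v : V) (C : ℝ) (hC : 1 / ((m : ℝ) - 1) < C)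
    (hsed : ∀ t : ℝ, C ≤ ‖qwU A t v v‖) :
    ∀ (u : Fin m) (t : ℝ),
      C - (C + 1) / (m : ℝ) ≤ ‖qwU (completeAdj m ⊗ₖ A) t (u, v) (u, v)‖ := by
  intro u t
  have hm3 : (3 : ℝ) ≤ (m : ℝ) := by exact_mod_cast hm
  have hm0 : (m : ℝ) ≠ 0 := by linarith
  have hmc0 : (m : ℂ) ≠ 0 := by exact_mod_cast hm0
  set Ac : Matrix V V ℂ := A.map (↑· : ℝ → ℂ) with hAc
  set Jc : Matrix (Fin m) (Fin m) ℂ := Matrix.of (fun _ _ => 1) with hJc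
  set P : Matrix (Fin m) (Fin m) ℂ := (m : ℂ)⁻¹ • Jc with hPdef
  set Q : Matrix (Fin m) (Fin m) ℂ := 1 - P with hQdef
  clear_value Ac Jc P Q
  have hJ : Jc * Jc = (m : ℂ) • Jc := by
    rw [hJc]
    ext i j
    simp [Matrix.mul_apply]
  have hP : P * P = P := by
    rw [hPdef, Matrix.smul_mul, Matrix.mul_smul, hJ, smul_smul, smul_smul]
    congr 1
    field_simp
  have hQ : Q * Q = Q := by
    rw [hQdef, sub_mul, one_mul, mul_sub, mul_one, hP]
    simp
  have hPQ : P * Q = 0 := by rw [hQdef, mul_sub, mul_one, hP, sub_self]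
  have hQP : Q * P = 0 := by rw [hQdef, sub_mul, one_mul, hP, sub_self]
  have hK : (completeAdj m).map (↑· : ℝ → ℂ) = ((m : ℂ) - 1) • P + (-1 : ℂ) • Q := by
    ext i j
    simp only [completeAdj, Matrix.map_apply, Matrix.of_apply, Matrix.add_apply,
      Matrix.smul_apply, hQdef, hPdef, Matrix.sub_apply, Matrix.one_apply, hJc,
      smul_eq_mul]
    split_ifs with h
    · push_cast; field_simp; ring
    · push_cast; field_simp; ring
  have hmap : ((completeAdj m ⊗ₖ A).map (↑· : ℝ → ℂ))
      = ((completeAdj m).map (↑· : ℝ → ℂ)) ⊗ₖ Ac := by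
    ext ⟨i, j⟩ ⟨k, l⟩
    simp [Matrix.kroneckerMap_apply, Matrix.map_apply, hAc]
  set c1 : ℂ := Complex.I * t * ((m : ℂ) - 1) with hc1
  set c2 : ℂ := -(Complex.I * t) with hc2
  clear_value c1 c2
  have hsplit : (Complex.I * t) • (((completeAdj m).map (↑· : ℝ → ℂ)) ⊗ₖ Ac)
      = c1 • (P ⊗ₖ Ac) + c2 • (Q ⊗ₖ Ac) := by
    rw [hK, Matrix.add_kronecker, Matrix.smul_kronecker, Matrix.smul_kronecker,
      smul_add, smul_smul, smul_smul, hc1, hc2]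
    congr 1
    congr 1
    ring
  have ha0 : (P ⊗ₖ Ac) * (Q ⊗ₖ Ac) = 0 := by
    rw [← Matrix.mul_kronecker_mul, hPQ, Matrix.zero_kronecker]
  have hb0 : (Q ⊗ₖ Ac) * (P ⊗ₖ Ac) = 0 := by
    rw [← Matrix.mul_kronecker_mul, hQP, Matrix.zero_kronecker]
  have hcomm : Commute (c1 • (P ⊗ₖ Ac)) (c2 • (Q ⊗ₖ Ac)) := by
    unfold Commute SemiconjBy
    rw [smul_mul_assoc, mul_smul_comm, ha0, smul_mul_assoc, mul_smul_comm, hb0]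
    simp
  set U1 : Matrix V V ℂ := qwU A (((m : ℝ) - 1) * t) with hU1
  set U2 : Matrix V V ℂ := qwU A (-t) with hU2
  clear_value U1 U2
  have hs1 : c1 = Complex.I * (((((m : ℝ) - 1) * t : ℝ)) : ℂ) := by
    rw [hc1]; push_cast; ring
  have hs2 : c2 = Complex.I * (((-t : ℝ)) : ℂ) := by
    rw [hc2]; push_cast; ring
  have e1 : exp (c1 • (P ⊗ₖ Ac)) = 1 + P ⊗ₖ (U1 - 1) := by
    rw [hU1, qwU, ← hAc, ← hs1, ← Matrix.kronecker_smul, exp_kron_idem P hP]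
  have e2 : exp (c2 • (Q ⊗ₖ Ac)) = 1 + Q ⊗ₖ (U2 - 1) := by
    rw [hU2, qwU, ← hAc, ← hs2, ← Matrix.kronecker_smul, exp_kron_idem Q hQ]
  have hzero : (P ⊗ₖ (U1 - 1)) * (Q ⊗ₖ (U2 - 1)) = 0 := by
    rw [← Matrix.mul_kronecker_mul, hPQ, Matrix.zero_kronecker]
  have key : qwU (completeAdj m ⊗ₖ A) t = 1 + P ⊗ₖ (U1 - 1) + Q ⊗ₖ (U2 - 1) := by
    rw [qwU, hmap, hsplit, Matrix.exp_add_of_commute _ _ hcomm, e1, e2]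
    rw [add_mul, one_mul, mul_add, mul_one, hzero]
    abel
  have hentry : qwU (completeAdj m ⊗ₖ A) t (u, v) (u, v)
      = (m : ℂ)⁻¹ * (U1 v v) + (1 - (m : ℂ)⁻¹) * (U2 v v) := by
    rw [key]
    simp only [Matrix.add_apply, Matrix.one_apply_eq, Matrix.kroneckerMap_apply,
      hPdef, hQdef, hJc, Matrix.smul_apply, Matrix.sub_apply, Matrix.one_apply_eq,
      Matrix.of_apply, smul_eq_mul, mul_one]
    ring
  have ha : ‖U1 v v‖ ≤ 1 := by
    rw [hU1]; exact qwU_diag_abs_le_one A hA _ v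
  have hb : C ≤ ‖U2 v v‖ := by
    rw [hU2]; exact hsed (-t)
  set x : ℂ := (m : ℂ)⁻¹ * (U1 v v) with hx
  set y : ℂ := (1 - (m : ℂ)⁻¹) * (U2 v v) with hy
  clear_value x y
  have habsx : ‖x‖ = (m : ℝ)⁻¹ * ‖U1 v v‖ := by
    rw [hx, norm_mul, norm_inv, Complex.norm_natCast]
  have hminv : (m : ℝ)⁻¹ ≤ 1 / 3 := by
    rw [inv_eq_one_div]
    apply div_le_div_of_nonneg_left <;> linarith
  have habsy : ‖y‖ = (1 - (m : ℝ)⁻¹) * ‖U2 v v‖ := by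
    have h1 : (1 - (m : ℂ)⁻¹) = (((1 - (m : ℝ)⁻¹ : ℝ)) : ℂ) := by push_cast; ring
    rw [hy, norm_mul, h1, Complex.norm_real, Real.norm_eq_abs, abs_of_nonneg]
    linarith
  have htri : ‖y‖ - ‖x‖ ≤ ‖x + y‖ := by
    have h := norm_sub_norm_le y (-x)
    simp only [norm_neg, sub_neg_eq_add] at h
    have h2 : y + x = x + y := by ring
    rw [h2] at h
    linarith
  have hxle : ‖x‖ ≤ (m : ℝ)⁻¹ := by
    rw [habsx]
    have h0 : (0:ℝ) ≤ (m : ℝ)⁻¹ := by positivity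
    nlinarith [norm_nonneg (U1 v v)]
  have hyge : (1 - (m : ℝ)⁻¹) * C ≤ ‖y‖ := by
    rw [habsy]
    have h0 : (0:ℝ) ≤ 1 - (m : ℝ)⁻¹ := by linarith
    nlinarith
  have hfinal : C - (C + 1) / (m : ℝ) ≤ (1 - (m : ℝ)⁻¹) * C - (m : ℝ)⁻¹ := by
    rw [div_eq_mul_inv]
    ring_nf
    exact le_rfl
  have main : C - (C + 1) / (m : ℝ) ≤ ‖x + y‖ := by linarith
  exact le_of_le_of_eq main (congrArg (fun z : ℂ => ‖z‖) hentry).symm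
end

section
/- Let Y be a graph with real symmetric adjacency matrix A(Y) and let B = A(K_2) ⊗ A(Y) be the adjacency matrix of the bipartite double K_2 × Y. Then for every vertex u of K_2, every vertex v of Y, and all real t, |U_B(t)_{(u,v),(u,v)}| = |Re(U_{A(Y)}(t)_{v,v})|. Consequently, K_2 × Y is C-sedentary at (u,v) if and only if |Re(U_{A(Y)}(t)_{v,v})| ≥ C for all t > 0. -/
open Kronecker
open scoped Matrix

/-- `exp` commutes with `Matrix.reindex`. -/
lemma exp_reindex_aux {m n : Type*} [Fintype m] [DecidableEq m] [Fintype n] [DecidableEq n]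
    (e : m ≃ n) (M : Matrix m m ℂ) :
    NormedSpace.exp (Matrix.reindex e e M) = Matrix.reindex e e (NormedSpace.exp M) := by
  letI : SeminormedRing (Matrix m m ℂ) := Matrix.linftyOpSemiNormedRing
  letI : NormedRing (Matrix m m ℂ) := Matrix.linftyOpNormedRing
  letI : NormedAlgebra ℂ (Matrix m m ℂ) := Matrix.linftyOpNormedAlgebra
  letI : NormedAlgebra ℚ (Matrix m m ℂ) := Matrix.linftyOpNormedAlgebra
  letI : SeminormedRing (Matrix n n ℂ) := Matrix.linftyOpSemiNormedRing
  letI : NormedRing (Matrix n n ℂ) := Matrix.linftyOpNormedRing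
  letI : NormedAlgebra ℂ (Matrix n n ℂ) := Matrix.linftyOpNormedAlgebra
  exact (NormedSpace.map_exp ((Matrix.reindexAlgEquiv ℂ ℂ e : Matrix m m ℂ ≃ₐ[ℂ] Matrix n n ℂ) :
    Matrix m m ℂ →+* Matrix n n ℂ) (continuous_id.matrix_reindex e e) M).symm

/-- `exp` on a pi type of matrices is computed pointwise. -/
lemma exp_pi_eval {ι V : Type*} [Fintype ι] [Fintype V] [DecidableEq V]
    (f : ι → Matrix V V ℂ) (i : ι) :
    NormedSpace.exp f i = NormedSpace.exp (f i) := by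
  letI : SeminormedRing (Matrix V V ℂ) := Matrix.linftyOpSemiNormedRing
  letI : NormedRing (Matrix V V ℂ) := Matrix.linftyOpNormedRing
  letI : NormedAlgebra ℂ (Matrix V V ℂ) := Matrix.linftyOpNormedAlgebra
  letI : NormedAlgebra ℚ (Matrix V V ℂ) := Matrix.linftyOpNormedAlgebra
  cases nonempty_fintype ι
  exact NormedSpace.map_exp (Pi.evalRingHom (fun _ => Matrix V V ℂ) i)
    (continuous_apply i) f

lemma bd_entry {V : Type*} [Fintype V] [DecidableEq V]
    (A : Matrix V V ℝ) (hA : A.IsSymm) (u : Fin 2) (v : V) (t : ℝ) :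
    qwU (completeAdj 2 ⊗ₖ A) t (u, v) (u, v) = ((qwU A t v v).re : ℂ) := by
  classical
  set s : ℂ := Complex.I * t with hs
  set B : Matrix V V ℂ := A.map (↑· : ℝ → ℂ) with hBdef
  have hBherm : Bᴴ = B := by
    ext i j
    have : A j i = A i j := by
      conv_rhs => rw [← hA]
      rfl
    simp [hBdef, Matrix.conjTranspose_apply, Matrix.map_apply, Complex.conj_ofReal, this]
  set H : Matrix (Fin 2) (Fin 2) ℂ := !![1, 1; 1, -1] with hH
  set K : Matrix (Fin 2) (Fin 2) ℂ := !![2⁻¹, 2⁻¹; 2⁻¹, -2⁻¹] with hK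
  have hHK : H * K = 1 := by
    ext i j
    fin_cases i <;> fin_cases j <;>
      simp [hH, hK, Matrix.mul_apply, Fin.sum_univ_two, Matrix.one_apply] <;> norm_num
  set D : Matrix (Fin 2) (Fin 2) ℂ := Matrix.diagonal ![1, -1] with hD
  set U : Matrix (Fin 2 × V) (Fin 2 × V) ℂ := H ⊗ₖ (1 : Matrix V V ℂ) with hU
  set U' : Matrix (Fin 2 × V) (Fin 2 × V) ℂ := K ⊗ₖ (1 : Matrix V V ℂ) with hU'
  have hUU' : U * U' = 1 := by
    rw [hU, hU', ← Matrix.mul_kronecker_mul, hHK, Matrix.one_mul, Matrix.one_kronecker_one]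
  have hUinv : U⁻¹ = U' := Matrix.inv_eq_right_inv hUU'
  have hUunit : IsUnit U := (Matrix.isUnit_iff_isUnit_det U).2 (Matrix.isUnit_det_of_right_inverse hUU')
  have hHDK : H * D * K = (completeAdj 2).map (↑· : ℝ → ℂ) := by
    ext i j
    fin_cases i <;> fin_cases j <;>
      simp [hH, hD, hK, Matrix.mul_apply, Fin.sum_univ_two, completeAdj,
        Matrix.map_apply, Matrix.diagonal_apply, Matrix.vecHead, Matrix.vecTail, Matrix.vecMul_diagonal, Matrix.mulVec_diagonal] <;> norm_num
  set f : Fin 2 → Matrix V V ℂ := ![s • B, (-s) • B] with hf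
  set e : V × Fin 2 ≃ Fin 2 × V := Equiv.prodComm V (Fin 2) with he
  have hmid : Matrix.reindex e e (Matrix.blockDiagonal f) = D ⊗ₖ (s • B) := by
    ext ⟨i, a⟩ ⟨j, b⟩
    fin_cases i <;> fin_cases j <;>
      simp [he, hf, hD, Matrix.blockDiagonal_apply, Matrix.kroneckerMap_apply,
        Matrix.diagonal_apply, Matrix.reindex_apply, Matrix.submatrix_apply]
  have hdecomp : s • (completeAdj 2 ⊗ₖ A).map (↑· : ℝ → ℂ) = U * (D ⊗ₖ (s • B)) * U⁻¹ := by
    rw [hUinv, hU, hU', ← Matrix.mul_kronecker_mul, ← Matrix.mul_kronecker_mul,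
      Matrix.one_mul, Matrix.mul_one, hHDK]
    ext ⟨i, a⟩ ⟨j, b⟩
    simp only [Matrix.smul_apply, Matrix.kroneckerMap_apply, Matrix.map_apply, hBdef,
      smul_eq_mul, Complex.ofReal_mul]
    ring
  have key : qwU (completeAdj 2 ⊗ₖ A) t =
      U * (Matrix.blockDiagonal fun i => NormedSpace.exp (f i)).reindex e e * U' := by
    rw [qwU, ← hs, hdecomp, Matrix.exp_conj U _ hUunit, hUinv, ← hmid,
      exp_reindex_aux, Matrix.exp_blockDiagonal]
    have hfe : NormedSpace.exp f = fun i => NormedSpace.exp (f i) :=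
      funext fun i => exp_pi_eval f i
    rw [hfe]
  set z : ℂ := NormedSpace.exp (s • B) v v with hz
  have hzq : qwU A t v v = z := by rw [qwU, ← hs, ← hBdef, hz]
  have hconj : NormedSpace.exp ((-s) • B) v v = (starRingEnd ℂ) z := by
    have h1 : (s • B)ᴴ = (-s) • B := by
      rw [Matrix.conjTranspose_smul, hBherm]
      congr 1
      simp [hs, Complex.conj_ofReal]
    rw [← h1, Matrix.exp_conjTranspose, hz]
    rfl
  have entry : (U * (Matrix.blockDiagonal fun i => NormedSpace.exp (f i)).reindex e e * U')
      (u, v) (u, v)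
      = 2⁻¹ * (NormedSpace.exp (s • B) v v + NormedSpace.exp ((-s) • B) v v) := by
    have h0 : NormedSpace.exp (f 0) = NormedSpace.exp (s • B) := by rw [hf]; rfl
    have h1 : NormedSpace.exp (f 1) = NormedSpace.exp ((-s) • B) := by rw [hf]; rfl
    simp only [Matrix.mul_apply, Fintype.sum_prod_type, Fin.sum_univ_two,
      Matrix.reindex_apply, Matrix.submatrix_apply, he, Equiv.prodComm_symm,
      Equiv.prodComm_apply, Prod.swap_prod_mk, Matrix.blockDiagonal_apply, hU, hU',
      Matrix.kroneckerMap_apply, Matrix.one_apply, h0, h1]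
    fin_cases u <;>
      simp [hH, hK, Finset.mul_sum, Finset.sum_mul, mul_comm, mul_left_comm,
        Finset.sum_ite_eq, Finset.sum_ite_eq'] <;> ring_nf
  rw [key, entry, hconj, ← hz, hzq, Complex.add_conj]
  push_cast
  ring

/-- For the bipartite double `K_2 × Y` (adjacency matrix `A(K_2) ⊗ A(Y)`), the diagonal
entries of the transition matrix satisfy
`|U(t)_{(u,v),(u,v)}| = |Re(U_{A(Y)}(t)_{v,v})|` for all `t`; consequently `K_2 × Y` is
`C`-sedentary at `(u,v)` if and only if `|Re(U_{A(Y)}(t)_{v,v})| ≥ C` for all `t > 0`. -/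
theorem bipartite_double_diagonal {V : Type*} [Fintype V] [DecidableEq V]
    (A : Matrix V V ℝ) (hA : A.IsSymm) :
    (∀ (u : Fin 2) (v : V) (t : ℝ),
      ‖qwU (completeAdj 2 ⊗ₖ A) t (u, v) (u, v)‖ = |(qwU A t v v).re|) ∧
    (∀ (u : Fin 2) (v : V) (C : ℝ),
      (∀ t > (0 : ℝ), C ≤ ‖qwU (completeAdj 2 ⊗ₖ A) t (u, v) (u, v)‖) ↔
        (∀ t > (0 : ℝ), C ≤ |(qwU A t v v).re|)) := by
  have h1 : ∀ (u : Fin 2) (v : V) (t : ℝ),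
      ‖qwU (completeAdj 2 ⊗ₖ A) t (u, v) (u, v)‖ = |(qwU A t v v).re| := by
    intro u v t
    rw [bd_entry A hA u v t, Complex.norm_real, Real.norm_eq_abs]
  exact ⟨h1, fun u v C =>
    forall_congr' fun t => forall_congr' fun _ => by rw [h1 u v t]⟩
end

section
/- Let n ≥ 1 and for each j ∈ [n] = {1,…,n} let m_j ≥ 2 be an integer. Let X = K_{m_1} × … × K_{m_n} be the direct product of complete graphs, with adjacency matrix A(K_{m_1}) ⊗ … ⊗ A(K_{m_n}) and transition matrix U_X(t). Then for every vertex (v_1,…,v_n) of X, U_X(t)_{((v_1,…,v_n),(v_1,…,v_n))} = (1/∏_{j∈[n]} m_j) · Σ_{S ⊆ [n]} (∏_{j∈S}(m_j−1)) · exp(i t (−1)^{|S|} ∏_{j∉S}(m_j−1)), where an empty product equals 1. -/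
open NormedSpace Finset

/-- The adjacency matrix of the direct product `K_{m 0} × ⋯ × K_{m (n-1)}` of complete
graphs: the Kronecker product of the matrices `J_{m j} - I_{m j}`, i.e. the entry at
`(v, w)` is `∏ j, (if v j = w j then 0 else 1)`. -/
def prodCompleteAdj {n : ℕ} (m : Fin n → ℕ) :
    Matrix ((j : Fin n) → Fin (m j)) ((j : Fin n) → Fin (m j)) ℝ :=
  Matrix.of fun v w => ∏ j, (if v j = w j then 0 else 1)


namespace ProdCompleteAux

variable {n : ℕ} (m : Fin n → ℕ)

/-- Entry of the `j`-th Kronecker factor of the idempotent `E S`: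
`Q_j = I - J/m_j` if `j ∈ S`, `P_j = J/m_j` otherwise. -/
noncomputable def ent (S : Finset (Fin n)) (j : Fin n) (a b : Fin (m j)) : ℂ :=
  if j ∈ S then (if a = b then 1 else 0) - (m j : ℂ)⁻¹ else (m j : ℂ)⁻¹

lemma prod_ite_mem_compl {M : Type*} [CommMonoid M] (S : Finset (Fin n)) (f g : Fin n → M) :
    ∏ j, (if j ∈ S then f j else g j) = (∏ j ∈ S, f j) * ∏ j ∈ Sᶜ, g j := by
  rw [Finset.prod_ite, Finset.filter_univ_mem, ← Finset.compl_filter, Finset.filter_univ_mem]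

lemma prod_delta (v w : (j : Fin n) → Fin (m j)) :
    (∏ j, if v j = w j then (1:ℂ) else 0) = if v = w then 1 else 0 := by
  by_cases h : v = w
  · simp [h]
  · obtain ⟨j, hj⟩ : ∃ j, v j ≠ w j := by
      by_contra hc
      push_neg at hc
      exact h (funext hc)
    rw [Finset.prod_eq_zero (Finset.mem_univ j) (by simp [hj]), if_neg h]

/-- The spectral idempotents of the product of complete graphs. -/
noncomputable def E (S : Finset (Fin n)) :
    Matrix ((j : Fin n) → Fin (m j)) ((j : Fin n) → Fin (m j)) ℂ :=
  Matrix.of fun v w => ∏ j, ent m S j (v j) (w j)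

lemma ent_sum_mul (hm : ∀ j, (m j : ℂ) ≠ 0) (S T : Finset (Fin n)) (j : Fin n)
    (a b : Fin (m j)) :
    ∑ x : Fin (m j), ent m S j a x * ent m T j x b =
      if (j ∈ S) = (j ∈ T) then ent m S j a b else 0 := by
  have key : ∑ x : Fin (m j), (m j : ℂ)⁻¹ = 1 := by
    rw [Finset.sum_const, Finset.card_univ, Fintype.card_fin, nsmul_eq_mul,
      mul_inv_cancel₀ (hm j)]
  have e1 : (∑ x : Fin (m j), (if a = x then (1:ℂ) else 0) * if x = b then 1 else 0)
      = if a = b then 1 else 0 := by simp [ite_mul, Finset.sum_ite_eq]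
  have e2 : (∑ x : Fin (m j), (m j:ℂ)⁻¹ * if x = b then (1:ℂ) else 0) = (m j:ℂ)⁻¹ := by
    simp [mul_ite]
  have e3 : (∑ x : Fin (m j), (if a = x then (1:ℂ) else 0) * (m j:ℂ)⁻¹) = (m j:ℂ)⁻¹ := by
    simp [ite_mul]
  have e4 : (∑ x : Fin (m j), (m j:ℂ)⁻¹ * (m j:ℂ)⁻¹) = (m j:ℂ)⁻¹ := by
    rw [← Finset.sum_mul, key, one_mul]
  unfold ent
  by_cases hS : j ∈ S <;> by_cases hT : j ∈ T <;>
      simp only [hS, hT, if_true, if_false, eq_self_iff_true, iff_true, iff_false, eq_iff_iff,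
        not_true, not_false_iff, sub_mul, mul_sub, Finset.sum_sub_distrib, e1, e2, e3, e4] <;>
    ring

lemma E_mul (hm : ∀ j, (m j : ℂ) ≠ 0) (S T : Finset (Fin n)) :
    E m S * E m T = if S = T then E m S else 0 := by
  ext v w
  rw [Matrix.mul_apply]
  have h1 : ∀ u : (j : Fin n) → Fin (m j),
      (∏ j, ent m S j (v j) (u j)) * ∏ j, ent m T j (u j) (w j)
        = ∏ j, (ent m S j (v j) (u j) * ent m T j (u j) (w j)) := fun u =>
    (Finset.prod_mul_distrib).symm
  simp only [E, Matrix.of_apply, h1]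
  rw [← Fintype.prod_sum fun j x => ent m S j (v j) x * ent m T j x (w j)]
  simp only [ent_sum_mul m hm S T]
  by_cases hST : S = T
  · subst hST
    simp [E]
  · obtain ⟨j, hj⟩ : ∃ j, ¬((j ∈ S) = (j ∈ T)) := by
      by_contra h
      push_neg at h
      exact hST (Finset.ext fun j => by rw [h j])
    rw [Finset.prod_eq_zero (Finset.mem_univ j) (by simp [hj])]
    simp [hST]

lemma E_sum : ∑ S : Finset (Fin n), E m S = 1 := by
  ext v w
  simp only [Matrix.sum_apply, E, Matrix.of_apply, Matrix.one_apply]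
  have h1 : ∀ j : Fin n, ((if v j = w j then (1:ℂ) else 0) - (m j : ℂ)⁻¹) + (m j : ℂ)⁻¹
      = if v j = w j then 1 else 0 := fun j => by ring
  calc ∑ S : Finset (Fin n), ∏ j, ent m S j (v j) (w j)
      = ∑ S : Finset (Fin n), (∏ j ∈ S, ((if v j = w j then (1:ℂ) else 0) - (m j : ℂ)⁻¹))
          * ∏ j ∈ Sᶜ, (m j : ℂ)⁻¹ := by
        refine Finset.sum_congr rfl fun S _ => ?_
        rw [← prod_ite_mem_compl]
        exact Finset.prod_congr rfl fun j _ => rfl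
    _ = ∏ j, ((if v j = w j then (1:ℂ) else 0) - (m j : ℂ)⁻¹ + (m j : ℂ)⁻¹) :=
        (Fintype.prod_add _ _).symm
    _ = ∏ j, (if v j = w j then (1:ℂ) else 0) := by simp only [h1]
    _ = if v = w then 1 else 0 := prod_delta m v w


/-- The eigenvalue attached to the idempotent `E S`. -/
noncomputable def lam (S : Finset (Fin n)) : ℂ :=
  (-1) ^ S.card * ∏ j ∈ Sᶜ, ((m j : ℂ) - 1)

lemma adj_decomp (hm : ∀ j, (m j : ℂ) ≠ 0) :
    (Matrix.of fun v w : (j : Fin n) → Fin (m j) =>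
        ∏ j, (if v j = w j then (0:ℂ) else 1)) =
      ∑ S : Finset (Fin n), lam m S • E m S := by
  ext v w
  simp only [Matrix.sum_apply, Matrix.smul_apply, Matrix.of_apply, smul_eq_mul]
  have h1 : ∀ j : Fin n, (if v j = w j then (0:ℂ) else 1) =
      (-((if v j = w j then (1:ℂ) else 0) - (m j : ℂ)⁻¹)) + ((m j : ℂ) - 1) * (m j : ℂ)⁻¹ := by
    intro j
    have : ((m j : ℂ)) * (m j : ℂ)⁻¹ = 1 := mul_inv_cancel₀ (hm j)
    by_cases h : v j = w j <;> simp only [h, if_true, if_false] <;> linear_combination -this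
  calc (∏ j, if v j = w j then (0:ℂ) else 1)
      = ∏ j, ((-((if v j = w j then (1:ℂ) else 0) - (m j : ℂ)⁻¹))
          + ((m j : ℂ) - 1) * (m j : ℂ)⁻¹) := by
        exact Finset.prod_congr rfl fun j _ => h1 j
    _ = ∑ S : Finset (Fin n),
          (∏ j ∈ S, -((if v j = w j then (1:ℂ) else 0) - (m j : ℂ)⁻¹))
            * ∏ j ∈ Sᶜ, ((m j : ℂ) - 1) * (m j : ℂ)⁻¹ := Fintype.prod_add _ _
    _ = ∑ S : Finset (Fin n), lam m S * ∏ j, ent m S j (v j) (w j) := by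
        refine Finset.sum_congr rfl fun S _ => ?_
        rw [show (∏ j ∈ S, -((if v j = w j then (1:ℂ) else 0) - (m j : ℂ)⁻¹))
            = (-1) ^ S.card * ∏ j ∈ S, ((if v j = w j then (1:ℂ) else 0) - (m j : ℂ)⁻¹) by
          rw [← Finset.prod_const, ← Finset.prod_mul_distrib]
          exact Finset.prod_congr rfl fun j _ => by ring]
        rw [Finset.prod_mul_distrib, show (∏ j, ent m S j (v j) (w j))
            = (∏ j ∈ S, ((if v j = w j then (1:ℂ) else 0) - (m j : ℂ)⁻¹))
              * ∏ j ∈ Sᶜ, (m j : ℂ)⁻¹ by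
          rw [← prod_ite_mem_compl]; exact Finset.prod_congr rfl fun j _ => rfl]
        rw [lam]
        ring

lemma E_diag (hm : ∀ j, (m j : ℂ) ≠ 0) (S : Finset (Fin n)) (v : (j : Fin n) → Fin (m j)) :
    E m S v v = (∏ j ∈ S, ((m j : ℂ) - 1)) * (∏ j, (m j : ℂ))⁻¹ := by
  have h1 : ∀ j : Fin n, ent m S j (v j) (v j)
      = if j ∈ S then ((m j : ℂ) - 1) * (m j : ℂ)⁻¹ else (m j : ℂ)⁻¹ := by
    intro j
    have h2 : ((m j : ℂ)) * (m j : ℂ)⁻¹ = 1 := mul_inv_cancel₀ (hm j)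
    unfold ent
    by_cases h : j ∈ S <;> simp only [h, eq_self_iff_true, if_true, if_false] <;>
      linear_combination -h2
  calc E m S v v = ∏ j, ent m S j (v j) (v j) := rfl
    _ = ∏ j, if j ∈ S then ((m j : ℂ) - 1) * (m j : ℂ)⁻¹ else (m j : ℂ)⁻¹ :=
        Finset.prod_congr rfl fun j _ => h1 j
    _ = ((∏ j ∈ S, ((m j : ℂ) - 1)) * ∏ j ∈ S, (m j : ℂ)⁻¹) * ∏ j ∈ Sᶜ, (m j : ℂ)⁻¹ := by
        rw [prod_ite_mem_compl, Finset.prod_mul_distrib]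
    _ = (∏ j ∈ S, ((m j : ℂ) - 1)) * ∏ j, (m j : ℂ)⁻¹ := by
        rw [mul_assoc, Finset.prod_mul_prod_compl]
    _ = (∏ j ∈ S, ((m j : ℂ) - 1)) * (∏ j, (m j : ℂ))⁻¹ := by
        rw [← Finset.prod_inv_distrib]

/-- The algebra homomorphism sending `f` to `∑ S, f S • E S`. -/
noncomputable def phi (hm : ∀ j, (m j : ℂ) ≠ 0) :
    (Finset (Fin n) → ℂ) →ₐ[ℂ]
      Matrix ((j : Fin n) → Fin (m j)) ((j : Fin n) → Fin (m j)) ℂ where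
  toFun f := ∑ S, f S • E m S
  map_one' := by simp [E_sum m]
  map_mul' f g := by
    simp only [Pi.mul_apply]
    rw [Finset.sum_mul_sum]
    refine Finset.sum_congr rfl fun S _ => ?_
    have : ∀ T : Finset (Fin n), (f S • E m S) * (g T • E m T)
        = (f S * g T) • (if S = T then E m S else 0) := fun T => by
      rw [smul_mul_smul_comm, E_mul m hm]
    simp only [this]
    simp only [smul_ite, smul_zero]
    rw [Finset.sum_ite_eq Finset.univ S]
    simp
  map_zero' := by simp
  map_add' f g := by simp [add_smul, Finset.sum_add_distrib]
  commutes' c := by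
    simp only [Pi.algebraMap_apply, Algebra.algebraMap_self, RingHom.id_apply,
      Algebra.algebraMap_eq_smul_one]
    rw [← Finset.smul_sum, E_sum m]

lemma phi_apply (hm : ∀ j, (m j : ℂ) ≠ 0) (f : Finset (Fin n) → ℂ) :
    phi m hm f = ∑ S, f S • E m S := rfl

end ProdCompleteAux



open ProdCompleteAux in
/-- The diagonal entries of the transition matrix of a direct product of complete graphs
`K_{m_1} × ⋯ × K_{m_n}` (each `m_j ≥ 2`, `n ≥ 1`):
`U(t)_{v,v} = (1/∏ m_j) ∑_{S ⊆ [n]} (∏_{j ∈ S} (m_j - 1)) e^{it(-1)^{|S|} ∏_{j ∉ S}(m_j - 1)}`,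
with empty products equal to `1`. -/
theorem prod_complete_diagonal {n : ℕ} (hn : 1 ≤ n) (m : Fin n → ℕ)
    (hm : ∀ j, 2 ≤ m j) (v : (j : Fin n) → Fin (m j)) (t : ℝ) :
    qwU (prodCompleteAdj m) t v v =
      (∏ j, (m j : ℂ))⁻¹ *
        ∑ S : Finset (Fin n),
          (∏ j ∈ S, ((m j : ℂ) - 1)) *
            Complex.exp (Complex.I * (t : ℂ) * (-1) ^ S.card * ∏ j ∈ Sᶜ, ((m j : ℂ) - 1)) := by
  classical
  have hm' : ∀ j, (m j : ℂ) ≠ 0 := fun j => Nat.cast_ne_zero.mpr (by have := hm j; omega)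
  letI : SeminormedRing (Matrix ((j : Fin n) → Fin (m j)) ((j : Fin n) → Fin (m j)) ℂ) :=
    Matrix.linftyOpSemiNormedRing
  letI : NormedRing (Matrix ((j : Fin n) → Fin (m j)) ((j : Fin n) → Fin (m j)) ℂ) :=
    Matrix.linftyOpNormedRing
  letI : NormedAlgebra ℂ (Matrix ((j : Fin n) → Fin (m j)) ((j : Fin n) → Fin (m j)) ℂ) :=
    Matrix.linftyOpNormedAlgebra
  set c : Finset (Fin n) → ℂ := fun S => Complex.I * t * lam m S with hc
  have hA : (Complex.I * (t : ℂ)) • (prodCompleteAdj m).map ((↑·) : ℝ → ℂ) = phi m hm' c := by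
    have hmap : (prodCompleteAdj m).map ((↑·) : ℝ → ℂ)
        = Matrix.of fun v w : (j : Fin n) → Fin (m j) =>
            ∏ j, (if v j = w j then (0:ℂ) else 1) := by
      ext v w
      simp [prodCompleteAdj, Matrix.map_apply, apply_ite ((↑·) : ℝ → ℂ)]
    rw [hmap, adj_decomp m hm', Finset.smul_sum, phi_apply]
    exact Finset.sum_congr rfl fun S _ => by rw [smul_smul]
  have hcont : Continuous (phi m hm') :=
    LinearMap.continuous_of_finiteDimensional (phi m hm').toLinearMap
  have hexp := map_exp (phi m hm') hcont c
  have hexpc : NormedSpace.exp c = fun S => Complex.exp (c S) := by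
    rw [Pi.exp_def]
    funext S
    rw [Complex.exp_eq_exp_ℂ]
  have key : qwU (prodCompleteAdj m) t = ∑ S : Finset (Fin n), Complex.exp (c S) • E m S := by
    rw [qwU, hA]
    refine hexp.symm.trans ?_
    rw [hexpc, phi_apply]
  rw [key, Matrix.sum_apply]
  simp only [Matrix.smul_apply, smul_eq_mul, E_diag m hm']
  rw [Finset.mul_sum]
  refine Finset.sum_congr rfl fun S _ => ?_
  have harg : c S = Complex.I * (t : ℂ) * (-1) ^ S.card * ∏ j ∈ Sᶜ, ((m j : ℂ) - 1) := by
    rw [hc]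
    simp only [lam]
    ring
  rw [harg]
  ring
end

section
/- Let n ≥ 3 and let X = K_2 × K_n be the direct product of the complete graphs K_2 and K_n, with adjacency matrix A(K_2) ⊗ A(K_n) and transition matrix U(t). Then for every vertex (u,v) of X there exists a time t_0 > 0 such that U(t_0)_{(u,v),(u,v)} = 0; in particular, no vertex of K_2 × K_n is sedentary, i.e. inf_{t>0} |U(t)_{(u,v),(u,v)}| = 0. -/
open Kronecker

noncomputable def qp : Matrix (Fin 2) (Fin 2) ℂ := Matrix.of fun _ _ => 2⁻¹
noncomputable def qm : Matrix (Fin 2) (Fin 2) ℂ := 1 - qp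
noncomputable def r1 (n : ℕ) : Matrix (Fin n) (Fin n) ℂ := Matrix.of fun _ _ => (n : ℂ)⁻¹
noncomputable def r2 (n : ℕ) : Matrix (Fin n) (Fin n) ℂ := 1 - r1 n

lemma qp_idem : qp * qp = qp := by
  ext i j
  simp [qp, Matrix.mul_apply, Fin.sum_univ_two]

lemma r1_idem {n : ℕ} (hn : (n : ℂ) ≠ 0) : r1 n * r1 n = r1 n := by
  ext i j
  simp [r1, Matrix.mul_apply, Finset.sum_const, Finset.card_univ]
  field_simp

noncomputable def PP (n : ℕ) : Fin 4 → Matrix (Fin 2 × Fin n) (Fin 2 × Fin n) ℂ :=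
  ![qp ⊗ₖ r1 n, qm ⊗ₖ r1 n, qp ⊗ₖ r2 n, qm ⊗ₖ r2 n]

lemma qm_idem : qm * qm = qm := by
  simp [qm, mul_sub, sub_mul, qp_idem]

lemma qp_qm : qp * qm = 0 := by simp [qm, mul_sub, qp_idem]
lemma qm_qp : qm * qp = 0 := by simp [qm, sub_mul, qp_idem]
lemma r2_idem {n : ℕ} (hn : (n : ℂ) ≠ 0) : r2 n * r2 n = r2 n := by
  simp [r2, mul_sub, sub_mul, r1_idem hn]
lemma r1_r2 {n : ℕ} (hn : (n : ℂ) ≠ 0) : r1 n * r2 n = 0 := by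
  simp [r2, mul_sub, r1_idem hn]
lemma r2_r1 {n : ℕ} (hn : (n : ℂ) ≠ 0) : r2 n * r1 n = 0 := by
  simp [r2, sub_mul, r1_idem hn]

lemma PP_mul_PP {n : ℕ} (hn : (n : ℂ) ≠ 0) (i j : Fin 4) :
    PP n i * PP n j = if i = j then PP n i else 0 := by
  fin_cases i <;> fin_cases j <;>
    simp [PP, ← Matrix.mul_kronecker_mul, qp_idem, qm_idem, qp_qm, qm_qp,
      r1_idem hn, r2_idem hn, r1_r2 hn, r2_r1 hn]

lemma PP_sum {n : ℕ} : ∑ i, PP n i = 1 := by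
  have h2 : qp + qm = 1 := by simp [qm]
  have hr : r1 n + r2 n = 1 := by simp [r2]
  calc ∑ i, PP n i = (qp + qm) ⊗ₖ (r1 n + r2 n) := by
        simp [PP, Fin.sum_univ_four, Matrix.add_kronecker, Matrix.kronecker_add]; abel
    _ = 1 := by rw [h2, hr, Matrix.one_kronecker_one]

noncomputable def phi (n : ℕ) (hn : (n : ℂ) ≠ 0) :
    (Fin 4 → ℂ) →+* Matrix (Fin 2 × Fin n) (Fin 2 × Fin n) ℂ where
  toFun x := ∑ i, x i • PP n i
  map_one' := by simp [PP_sum]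
  map_zero' := by simp
  map_add' x y := by simp [add_smul, Finset.sum_add_distrib]
  map_mul' x y := by
    show ∑ i, (x * y) i • PP n i = (∑ i, x i • PP n i) * ∑ i, y i • PP n i
    rw [Finset.sum_mul]
    simp [Finset.mul_sum, smul_mul_assoc, mul_smul_comm, PP_mul_PP hn, smul_smul,
      Finset.sum_ite_eq, mul_comm]

lemma M_decomp {n : ℕ} (hn : (n : ℂ) ≠ 0) :
    (completeAdj 2 ⊗ₖ completeAdj n).map ((↑·) : ℝ → ℂ)
      = ((n : ℂ) - 1) • PP n 0 - ((n : ℂ) - 1) • PP n 1 - PP n 2 + PP n 3 := by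
  ext ⟨i, j⟩ ⟨k, l⟩
  fin_cases i <;> fin_cases k <;> rcases eq_or_ne j l with h | h <;>
    simp [PP, completeAdj, qp, qm, r1, r2, h, Matrix.one_apply,
      Matrix.kroneckerMap_apply, Matrix.map_apply] <;>
    field_simp <;> ring

noncomputable def cvec (n : ℕ) (t : ℝ) : Fin 4 → ℂ :=
  ![((n : ℂ) - 1) * t * Complex.I, -(((n : ℂ) - 1) * t) * Complex.I,
    -(t : ℂ) * Complex.I, (t : ℂ) * Complex.I]

lemma smul_M {n : ℕ} (hn : (n : ℂ) ≠ 0) (t : ℝ) :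
    (Complex.I * (t : ℂ)) • ((completeAdj 2 ⊗ₖ completeAdj n).map ((↑·) : ℝ → ℂ))
      = phi n hn (cvec n t) := by
  rw [M_decomp hn]
  show _ = ∑ i, cvec n t i • PP n i
  simp only [cvec, Fin.sum_univ_four, Matrix.cons_val_zero, Matrix.cons_val_one,
    Matrix.head_cons, Matrix.cons_val_two, Matrix.tail_cons, Matrix.cons_val_three]
  module

lemma phi_cont {n : ℕ} (hn : (n : ℂ) ≠ 0) : Continuous (phi n hn) := by
  show Continuous fun x : Fin 4 → ℂ => ∑ i, x i • PP n i
  exact continuous_finset_sum _ fun i _ => ((continuous_apply i).smul continuous_const)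

lemma exp_eq {n : ℕ} (hn : (n : ℂ) ≠ 0) (t : ℝ) :
    qwU (completeAdj 2 ⊗ₖ completeAdj n) t
      = phi n hn fun i => Complex.exp (cvec n t i) := by
  letI : SeminormedRing (Matrix (Fin 2 × Fin n) (Fin 2 × Fin n) ℂ) :=
    Matrix.linftyOpSemiNormedRing
  letI : NormedRing (Matrix (Fin 2 × Fin n) (Fin 2 × Fin n) ℂ) := Matrix.linftyOpNormedRing
  letI : NormedAlgebra ℂ (Matrix (Fin 2 × Fin n) (Fin 2 × Fin n) ℂ) :=
    Matrix.linftyOpNormedAlgebra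
  have h1 : qwU (completeAdj 2 ⊗ₖ completeAdj n) t
      = NormedSpace.exp (phi n hn (cvec n t)) := by
    rw [qwU, smul_M hn]
  rw [h1]
  refine (NormedSpace.map_exp (phi n hn) (phi_cont hn) (cvec n t)).symm.trans ?_
  congr 1
  funext i
  rw [Pi.coe_exp, ← Complex.exp_eq_exp_ℂ]

lemma entry_eq {n : ℕ} (hn : (n : ℂ) ≠ 0) (t : ℝ) (u : Fin 2) (v : Fin n) :
    qwU (completeAdj 2 ⊗ₖ completeAdj n) t (u, v) (u, v)
      = (((n : ℝ)⁻¹ * Real.cos (((n : ℝ) - 1) * t)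
          + (1 - (n : ℝ)⁻¹) * Real.cos t : ℝ) : ℂ) := by
  rw [exp_eq hn]
  show (∑ i, Complex.exp (cvec n t i) • PP n i) (u, v) (u, v) = _
  have h1 := Complex.two_cos (x := ((n : ℂ) - 1) * (t : ℂ))
  have h2 := Complex.two_cos (x := (t : ℂ))
  have hn' : (n : ℝ) ≠ 0 := by exact_mod_cast hn
  simp only [Matrix.sum_apply, Matrix.smul_apply, PP, cvec, Fin.sum_univ_four,
    Matrix.cons_val_zero, Matrix.cons_val_one, Matrix.head_cons, Matrix.cons_val_two,
    Matrix.tail_cons, Matrix.cons_val_three, Matrix.kroneckerMap_apply, qp, qm, r1, r2,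
    Matrix.sub_apply, Matrix.one_apply_eq, Matrix.of_apply, smul_eq_mul]
  push_cast
  linear_combination (-(2⁻¹ * (n : ℂ)⁻¹)) * h1 + (-(2⁻¹ * (1 - (n : ℂ)⁻¹))) * h2

theorem k2_times_kn_not_sedentary_aux {n : ℕ} (hn : 3 ≤ n) (u : Fin 2) (v : Fin n) :
    (∃ t₀ > (0 : ℝ), qwU (completeAdj 2 ⊗ₖ completeAdj n) t₀ (u, v) (u, v) = 0) ∧
    sInf ((fun t => ‖qwU (completeAdj 2 ⊗ₖ completeAdj n) t (u, v) (u, v)‖) ''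
        Set.Ioi (0 : ℝ)) = 0 := by
  have h3 : (3 : ℝ) ≤ n := by exact_mod_cast hn
  have hnR : (n : ℝ) ≠ 0 := by positivity
  have hn0 : (n : ℂ) ≠ 0 := by exact_mod_cast Complex.ofReal_ne_zero.mpr hnR
  set f : ℝ → ℝ := fun t =>
    (n : ℝ)⁻¹ * Real.cos (((n : ℝ) - 1) * t) + (1 - (n : ℝ)⁻¹) * Real.cos t with hf
  have hentry : ∀ t : ℝ, qwU (completeAdj 2 ⊗ₖ completeAdj n) t (u, v) (u, v) = (f t : ℂ) :=
    fun t => entry_eq hn0 t u v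
  have hf0 : f 0 = 1 := by
    simp [hf]
  have hfπ : f Real.pi < 0 := by
    have h1 : Real.cos (((n : ℝ) - 1) * Real.pi) ≤ 1 := Real.cos_le_one _
    have h4 : (n : ℝ)⁻¹ ≤ 3⁻¹ := by
      apply inv_anti₀ <;> norm_num [h3]
    have h5 : (0 : ℝ) < (n : ℝ)⁻¹ := by positivity
    simp only [hf, Real.cos_pi]
    nlinarith
  have hcont : Continuous f := by fun_prop
  obtain ⟨t₀, ht₀mem, ht₀⟩ : ∃ t ∈ Set.Ioc (0 : ℝ) Real.pi, f t = 0 := by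
    have hsub := intermediate_value_Ioc' (le_of_lt Real.pi_pos) hcont.continuousOn
    have h0mem : (0 : ℝ) ∈ Set.Ico (f Real.pi) (f 0) := ⟨hfπ.le, by rw [hf0]; norm_num⟩
    obtain ⟨t, ht, hft⟩ := hsub h0mem
    exact ⟨t, ht, hft⟩
  have hzero : qwU (completeAdj 2 ⊗ₖ completeAdj n) t₀ (u, v) (u, v) = 0 := by
    rw [hentry, ht₀]; simp
  refine ⟨⟨t₀, ht₀mem.1, hzero⟩, ?_⟩
  apply le_antisymm
  · apply csInf_le
    · exact ⟨0, by rintro y ⟨t, -, rfl⟩; exact norm_nonneg _⟩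
    · exact ⟨t₀, ht₀mem.1, by simp [hzero]⟩
  · apply le_csInf ⟨_, Set.mem_image_of_mem _ ht₀mem.1⟩
    rintro b ⟨t, -, rfl⟩
    exact norm_nonneg _

/-- For `n ≥ 3` and the direct product `K_2 × K_n` (adjacency matrix
`A(K_2) ⊗ A(K_n)`), every vertex `(u,v)` has a time `t₀ > 0` at which the diagonal entry
of the transition matrix vanishes; in particular no vertex of `K_2 × K_n` is sedentary:
the infimum over positive times of `|U(t)_{(u,v),(u,v)}|` is zero. -/
theorem k2_times_kn_not_sedentary {n : ℕ} (hn : 3 ≤ n) (u : Fin 2) (v : Fin n) :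
    (∃ t₀ > (0 : ℝ), qwU (completeAdj 2 ⊗ₖ completeAdj n) t₀ (u, v) (u, v) = 0) ∧
    sInf ((fun t => ‖qwU (completeAdj 2 ⊗ₖ completeAdj n) t (u, v) (u, v)‖) ''
        Set.Ioi (0 : ℝ)) = 0 := by
  exact k2_times_kn_not_sedentary_aux hn u v
end

section
/- Let X be a graph on n_X vertices, u a vertex of X, and suppose |U_{L(X)}(t)_{u,u}| ≥ C for all t > 0, where C > 2/n_X (u is C-sedentary in X with respect to the Laplacian). Then for every graph Y, the vertex u is (C − 2/n_X)-sedentary in the join X ∨ Y with respect to its Laplacian: |U_{L(X∨Y)}(t)_{u,u}| ≥ C − 2/n_X for all t > 0. -/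
/-- The Laplacian matrix `L = D - A` associated with an adjacency matrix `A`, where `D`
is the diagonal matrix of row sums (degrees). -/
def lap {V : Type*} [Fintype V] [DecidableEq V] (A : Matrix V V ℝ) : Matrix V V ℝ :=
  Matrix.diagonal (fun u => ∑ w, A u w) - A

/-- The adjacency matrix of the join `X ∨ Y` of the graphs with adjacency matrices
`AX` and `AY`: adjacency within each graph is kept, and every vertex of `X` is joined to
every vertex of `Y`. -/
def joinAdj {V W : Type*} (AX : Matrix V V ℝ) (AY : Matrix W W ℝ) :
    Matrix (V ⊕ W) (V ⊕ W) ℝ :=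
  Matrix.of fun x y =>
    match x, y with
    | Sum.inl a, Sum.inl b => AX a b
    | Sum.inr a, Sum.inr b => AY a b
    | _, _ => 1

open NormedSpace Matrix Nat

section ExpHelpers
variable {n' m' : Type*} [Fintype n'] [DecidableEq n'] [Fintype m'] [DecidableEq m']

lemma myMatExpSummable (A : Matrix n' n' ℂ) :
    Summable (fun k : ℕ => ((k ! : ℂ))⁻¹ • A ^ k) := by
  letI : SeminormedRing (Matrix n' n' ℂ) := Matrix.linftyOpSemiNormedRing
  letI : NormedRing (Matrix n' n' ℂ) := Matrix.linftyOpNormedRing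
  letI : NormedAlgebra ℂ (Matrix n' n' ℂ) := Matrix.linftyOpNormedAlgebra
  exact NormedSpace.expSeries_summable' A

/-- Right multiplication-by-a-vector as a continuous linear map on matrices. -/
noncomputable def mvCLM (w : n' → ℂ) : Matrix n' n' ℂ →L[ℂ] (n' → ℂ) :=
  LinearMap.toContinuousLinearMap
    { toFun := fun M => M *ᵥ w
      map_add' := fun M N => Matrix.add_mulVec M N w
      map_smul' := fun c M => Matrix.smul_mulVec c M w }

@[simp] lemma mvCLM_apply (w : n' → ℂ) (M : Matrix n' n' ℂ) : mvCLM w M = M *ᵥ w := rfl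

lemma exp_mulVec_eigen_s19 (A : Matrix n' n' ℂ) (v : n' → ℂ) (c : ℂ) (h : A *ᵥ v = c • v) :
    exp A *ᵥ v = Complex.exp c • v := by
  have hpow : ∀ k : ℕ, A ^ k *ᵥ v = c ^ k • v := by
    intro k
    induction k with
    | zero => simp [Matrix.one_mulVec]
    | succ k ih =>
      rw [pow_succ, pow_succ, ← Matrix.mulVec_mulVec, h, Matrix.mulVec_smul, ih,
        smul_smul, mul_comm]
  have h0 : exp A *ᵥ v = mvCLM v (exp A) := rfl
  rw [h0, exp_eq_tsum ℂ, ContinuousLinearMap.map_tsum _ (myMatExpSummable A)]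
  have h2 : ∀ k : ℕ, mvCLM v (((k ! : ℂ))⁻¹ • A ^ k) = (((k ! : ℂ))⁻¹ * c ^ k) • v := by
    intro k
    simp [hpow k, smul_smul]
  simp_rw [h2]
  have hs : Summable (fun k : ℕ => ((k ! : ℂ))⁻¹ * c ^ k) := by
    simpa [smul_eq_mul] using NormedSpace.expSeries_summable' (𝕂 := ℂ) c
  rw [Summable.tsum_smul_const ?_, Complex.exp_eq_exp_ℂ, exp_eq_tsum ℂ]
  · simp [smul_eq_mul]
  · exact hs

lemma exp_mulVec_intertwine (A : Matrix n' n' ℂ) (B : Matrix m' m' ℂ)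
    (f : (m' → ℂ) →L[ℂ] (n' → ℂ)) (P : (m' → ℂ) → Prop)
    (hP : ∀ x, P x → P (B *ᵥ x))
    (hf : ∀ x, P x → A *ᵥ (f x) = f (B *ᵥ x))
    (v : m' → ℂ) (hv : P v) :
    exp A *ᵥ f v = f (exp B *ᵥ v) := by
  have key : ∀ k : ℕ, ∀ x, P x → (A ^ k *ᵥ f x = f (B ^ k *ᵥ x) ∧ P (B ^ k *ᵥ x)) := by
    intro k
    induction k with
    | zero => intro x hx; simp [Matrix.one_mulVec]; exact hx
    | succ k ih =>
      intro x hx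
      have h1 : A ^ (k + 1) *ᵥ f x = A ^ k *ᵥ (A *ᵥ f x) := by
        rw [pow_succ, ← Matrix.mulVec_mulVec]
      have h2 : B ^ (k + 1) *ᵥ x = B ^ k *ᵥ (B *ᵥ x) := by
        rw [pow_succ, ← Matrix.mulVec_mulVec]
      obtain ⟨ihe, ihp⟩ := ih (B *ᵥ x) (hP x hx)
      refine ⟨?_, by rw [h2]; exact ihp⟩
      rw [h1, hf x hx, ihe, h2]
  have hsum : Summable (fun k : ℕ => ((k ! : ℂ))⁻¹ • (B ^ k *ᵥ v)) := by
    have := (myMatExpSummable B).map (mvCLM v) (mvCLM v).continuous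
    exact this.congr fun k => by simp [Matrix.smul_mulVec, Function.comp]
  calc exp A *ᵥ f v = mvCLM (f v) (exp A) := rfl
    _ = mvCLM (f v) (∑' k : ℕ, ((k ! : ℂ))⁻¹ • A ^ k) := by rw [exp_eq_tsum ℂ]
    _ = ∑' k : ℕ, mvCLM (f v) (((k ! : ℂ))⁻¹ • A ^ k) :=
        ContinuousLinearMap.map_tsum _ (myMatExpSummable A)
    _ = ∑' k : ℕ, f (((k ! : ℂ))⁻¹ • (B ^ k *ᵥ v)) := by
        refine tsum_congr fun k => ?_
        simp [Matrix.smul_mulVec, (key k v hv).1]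
    _ = f (∑' k : ℕ, ((k ! : ℂ))⁻¹ • (B ^ k *ᵥ v)) := (ContinuousLinearMap.map_tsum f hsum).symm
    _ = f (exp B *ᵥ v) := by
        congr 1
        have h0 : exp B *ᵥ v = mvCLM v (exp B) := rfl
        rw [h0, exp_eq_tsum ℂ, ContinuousLinearMap.map_tsum _ (myMatExpSummable B)]
        exact tsum_congr fun k => by simp [Matrix.smul_mulVec]

/-- dist the extension-by-zero map `(V → ℂ) → (V ⊕ W → ℂ)` as a continuous linear map. -/
noncomputable def elimCLM (V W : Type*) [Fintype V] : (V → ℂ) →L[ℂ] (V ⊕ W → ℂ) :=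
  LinearMap.toContinuousLinearMap
    { toFun := fun x => Sum.elim x 0
      map_add' := by intro x y; funext z; cases z <;> simp
      map_smul' := by intro c x; funext z; cases z <;> simp }

@[simp] lemma elimCLM_apply (V W : Type*) [Fintype V] (x : V → ℂ) :
    elimCLM V W x = Sum.elim x 0 := rfl

lemma map_mulVec_apply (M : Matrix n' n' ℝ) (x : n' → ℂ) (i : n') :
    ((M.map (↑· : ℝ → ℂ)) *ᵥ x) i = ∑ j, (M i j : ℂ) * x j := by
  simp [Matrix.mulVec, dotProduct, Matrix.map_apply]

lemma entry_eq_mulVec_single (M : Matrix n' n' ℂ) (i j : n') :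
    M i j = (M *ᵥ Pi.single j 1) i := by
  simp [Matrix.mulVec, dotProduct, Pi.single_apply, mul_ite,
    Finset.sum_ite_eq']

lemma exp_smul_one (c : ℂ) :
    exp (c • (1 : Matrix n' n' ℂ)) = Complex.exp c • (1 : Matrix n' n' ℂ) := by
  have harg : (exp fun _ : n' => c) = fun _ : n' => Complex.exp c := by
    funext i
    rw [Pi.coe_exp, Complex.exp_eq_exp_ℂ]
  rw [Matrix.smul_one_eq_diagonal, Matrix.exp_diagonal, harg, Matrix.smul_one_eq_diagonal]

end ExpHelpers

section Entries
variable {V W : Type*} [Fintype V] [DecidableEq V] [Fintype W] [DecidableEq W]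
  (AX : Matrix V V ℝ) (AY : Matrix W W ℝ)

lemma lap_row_sum (A : Matrix V V ℝ) (a : V) : ∑ b, lap A a b = 0 := by
  simp [lap, Matrix.diagonal_apply, Finset.sum_sub_distrib, Finset.sum_ite_eq]

lemma lap_col_sum (A : Matrix V V ℝ) (hs : A.IsSymm) (b : V) : ∑ a, lap A a b = 0 := by
  have h : ∀ a, lap A a b = lap A b a := by
    intro a
    simp only [lap, Matrix.sub_apply, Matrix.diagonal_apply]
    rw [hs.apply a b]
    congr 1
    by_cases h : a = b
    · simp [h]
    · rw [if_neg h, if_neg (fun e => h e.symm)]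
  simp_rw [h]
  exact lap_row_sum A b

lemma Jll (a b : V) : lap (joinAdj AX AY) (Sum.inl a) (Sum.inl b)
    = lap AX a b + (if a = b then (Fintype.card W : ℝ) else 0) := by
  simp only [lap, Matrix.sub_apply, Matrix.diagonal_apply, joinAdj, Matrix.of_apply]
  rw [Fintype.sum_sum_type]
  by_cases h : a = b <;> simp [h] <;> ring

lemma Jlr (a : V) (c : W) : lap (joinAdj AX AY) (Sum.inl a) (Sum.inr c) = -1 := by
  simp [lap, Matrix.diagonal_apply, joinAdj]

lemma Jrl (c : W) (a : V) : lap (joinAdj AX AY) (Sum.inr c) (Sum.inl a) = -1 := by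
  simp [lap, Matrix.diagonal_apply, joinAdj]

lemma Jrr (c c' : W) : lap (joinAdj AX AY) (Sum.inr c) (Sum.inr c')
    = lap AY c c' + (if c = c' then (Fintype.card V : ℝ) else 0) := by
  simp only [lap, Matrix.sub_apply, Matrix.diagonal_apply, joinAdj, Matrix.of_apply]
  rw [Fintype.sum_sum_type]
  by_cases h : c = c' <;> simp [h] <;> ring

end Entries

/-- If a vertex `u` of a graph `X` on `n_X` vertices is `C`-sedentary with respect to
the Laplacian, with `C > 2/n_X`, then for every graph `Y` the vertex `u` is
`(C - 2/n_X)`-sedentary in the join `X ∨ Y` with respect to its Laplacian. -/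
theorem join_preserves_sedentary {V W : Type*} [Fintype V] [DecidableEq V]
    [Fintype W] [DecidableEq W]
    (AX : Matrix V V ℝ) (hXsymm : AX.IsSymm) (hXloop : ∀ a, AX a a = 0)
    (hX01 : ∀ a b, AX a b = 0 ∨ AX a b = 1)
    (AY : Matrix W W ℝ) (hYsymm : AY.IsSymm) (hYloop : ∀ a, AY a a = 0)
    (hY01 : ∀ a b, AY a b = 0 ∨ AY a b = 1)
    (u : V) (C : ℝ) (hC : 2 / (Fintype.card V : ℝ) < C)
    (hsed : ∀ t > (0 : ℝ), C ≤ ‖qwU (lap AX) t u u‖) :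
    ∀ t > (0 : ℝ), C - 2 / (Fintype.card V : ℝ) ≤
      ‖qwU (lap (joinAdj AX AY)) t (Sum.inl u) (Sum.inl u)‖ := by
  intro t ht
  have hNpos : 0 < Fintype.card V := @Fintype.card_pos V _ ⟨u⟩
  have hn0 : (Fintype.card V : ℂ) ≠ 0 := by
    simp only [Ne, Nat.cast_eq_zero]; omega
  have hnm0 : (Fintype.card V : ℂ) + (Fintype.card W : ℂ) ≠ 0 := by
    have h : (Fintype.card V : ℂ) + (Fintype.card W : ℂ)
        = ((Fintype.card V + Fintype.card W : ℕ) : ℂ) := by push_cast; ring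
    rw [h]
    simp only [Ne, Nat.cast_eq_zero]; omega
  set LX : Matrix V V ℂ := (lap AX).map (↑· : ℝ → ℂ) with hLX
  set LJ : Matrix (V ⊕ W) (V ⊕ W) ℂ := (lap (joinAdj AX AY)).map (↑· : ℝ → ℂ) with hLJ
  set A : Matrix (V ⊕ W) (V ⊕ W) ℂ := (Complex.I * t) • LJ with hA
  set BX : Matrix V V ℂ := (Complex.I * t) • LX with hBX
  set Dm : Matrix V V ℂ := LX + (Fintype.card W : ℂ) • (1 : Matrix V V ℂ) with hDm
  set B : Matrix V V ℂ := (Complex.I * t) • Dm with hB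
  set onV : V → ℂ := fun _ => 1 with honV
  set vv : V → ℂ := Pi.single u 1 - ((Fintype.card V : ℂ))⁻¹ • onV with hvv
  set f1 : V ⊕ W → ℂ := fun _ => 1 with hf1
  set f2 : V ⊕ W → ℂ :=
    Sum.elim (fun _ => (Fintype.card W : ℂ)) (fun _ => -(Fintype.card V : ℂ)) with hf2
  -- row sums
  have hX1 : LX *ᵥ onV = 0 := by
    funext a
    rw [hLX, map_mulVec_apply]
    simp only [honV, mul_one, Pi.zero_apply]
    norm_cast
    exact lap_row_sum AX a
  have hJ1 : LJ *ᵥ f1 = 0 := by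
    funext x
    rw [hLJ, map_mulVec_apply]
    simp only [hf1, mul_one, Pi.zero_apply]
    norm_cast
    exact lap_row_sum (joinAdj AX AY) x
  have hrowX : ∀ a, (∑ b, ((lap AX a b : ℝ) : ℂ)) = 0 := by
    intro a; norm_cast; exact lap_row_sum AX a
  have hrowY : ∀ c, (∑ c', ((lap AY c c' : ℝ) : ℂ)) = 0 := by
    intro c; norm_cast; exact lap_row_sum AY c
  have hXcol : ∀ b, (∑ a, ((lap AX a b : ℝ) : ℂ)) = 0 := by
    intro b; norm_cast; exact lap_col_sum AX hXsymm b
  -- LJ acting on f2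
  have hJ2 : LJ *ᵥ f2 = ((Fintype.card V : ℂ) + (Fintype.card W : ℂ)) • f2 := by
    funext x
    cases x with
    | inl a =>
      rw [hLJ, map_mulVec_apply, Fintype.sum_sum_type]
      simp only [hf2, Sum.elim_inl, Sum.elim_inr, Jll, Jlr]
      push_cast [apply_ite (fun r : ℝ => (r : ℂ))]
      simp only [add_mul, ite_mul, zero_mul, Finset.sum_add_distrib, Finset.sum_ite_eq,
        Finset.mem_univ, if_true, ← Finset.sum_mul, Finset.sum_const, Finset.card_univ,
        nsmul_eq_mul, Pi.smul_apply, Sum.elim_inl, smul_eq_mul]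
      rw [hrowX a, zero_mul, zero_add]
      ring
    | inr c =>
      rw [hLJ, map_mulVec_apply, Fintype.sum_sum_type]
      simp only [hf2, Sum.elim_inl, Sum.elim_inr, Jrl, Jrr]
      push_cast [apply_ite (fun r : ℝ => (r : ℂ))]
      simp only [add_mul, ite_mul, zero_mul, Finset.sum_add_distrib, Finset.sum_ite_eq,
        Finset.mem_univ, if_true, ← Finset.sum_mul, Finset.sum_const, Finset.card_univ,
        nsmul_eq_mul, Pi.smul_apply, Sum.elim_inr, smul_eq_mul]
      rw [hrowY c, zero_mul, zero_add]
      ring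
  -- intertwining for the zero-sum subspace
  have hDmx : ∀ x : V → ℂ, Dm *ᵥ x = LX *ᵥ x + (Fintype.card W : ℂ) • x := by
    intro x
    rw [hDm, Matrix.add_mulVec, Matrix.smul_mulVec, Matrix.one_mulVec]
  have hcore : ∀ x : V → ℂ, (∑ a, x a) = 0 →
      LJ *ᵥ (Sum.elim x 0) = Sum.elim (Dm *ᵥ x) 0 := by
    intro x hx
    funext y
    cases y with
    | inl a =>
      rw [hLJ, map_mulVec_apply, Fintype.sum_sum_type]
      simp only [Sum.elim_inl, Sum.elim_inr, Jll, Jlr, Pi.zero_apply, mul_zero,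
        Finset.sum_const_zero, add_zero]
      push_cast [apply_ite (fun r : ℝ => (r : ℂ))]
      simp only [add_mul, ite_mul, zero_mul, Finset.sum_add_distrib, Finset.sum_ite_eq,
        Finset.mem_univ, if_true]
      rw [hDmx x]
      simp only [Pi.add_apply, Pi.smul_apply, smul_eq_mul, hLX, map_mulVec_apply]
    | inr c =>
      rw [hLJ, map_mulVec_apply, Fintype.sum_sum_type]
      simp only [Sum.elim_inl, Sum.elim_inr, Jrl, Pi.zero_apply, mul_zero,
        Finset.sum_const_zero, add_zero]
      push_cast
      simp only [neg_one_mul, Finset.sum_neg_distrib]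
      rw [hx]
      simp
  have hPpres : ∀ x : V → ℂ, (∑ a, x a) = 0 → (∑ a, (B *ᵥ x) a) = 0 := by
    intro x hx
    have hsum : ∑ a, (Dm *ᵥ x) a = 0 := by
      rw [hDmx x]
      simp only [Pi.add_apply, Pi.smul_apply, smul_eq_mul, Finset.sum_add_distrib]
      have h1 : ∑ a, (LX *ᵥ x) a = 0 := by
        simp only [hLX, map_mulVec_apply]
        rw [Finset.sum_comm]
        have h2 : ∀ b, ∑ a, ((lap AX a b : ℝ) : ℂ) * x b = 0 := by
          intro b
          rw [← Finset.sum_mul, hXcol b, zero_mul]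
        simp [h2]
      have h2 : ∑ a, (Fintype.card W : ℂ) * x a = 0 := by
        rw [← Finset.mul_sum, hx, mul_zero]
      rw [h1, h2, add_zero]
    rw [hB]
    simp only [Matrix.smul_mulVec, Pi.smul_apply, smul_eq_mul]
    rw [← Finset.mul_sum, hsum, mul_zero]
  -- the exp-level intertwining
  have hEv : exp A *ᵥ (Sum.elim vv 0) = Sum.elim (exp B *ᵥ vv) 0 := by
    have hvsum : ∑ a, vv a = 0 := by
      simp only [hvv, Pi.sub_apply, Pi.smul_apply, smul_eq_mul, Finset.sum_sub_distrib,
        honV, mul_one, Finset.sum_const, Finset.card_univ, nsmul_eq_mul,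
        Pi.single_apply, Finset.sum_ite_eq', Finset.mem_univ, if_true]
      field_simp
      ring
    have key := exp_mulVec_intertwine A B (elimCLM V W) (fun x => (∑ a, x a) = 0)
      hPpres ?_ vv hvsum
    · simpa using key
    · intro x hx
      simp only [elimCLM_apply]
      rw [hA, hB, Matrix.smul_mulVec, Matrix.smul_mulVec, hcore x hx]
      funext y
      cases y <;> simp
  -- exp of B in terms of exp of BX
  set ee1 : ℂ := Complex.exp (Complex.I * t * (Fintype.card W : ℂ)) with hee1
  set ee2 : ℂ := Complex.exp
    (Complex.I * t * ((Fintype.card V : ℂ) + (Fintype.card W : ℂ))) with hee2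
  have hexpB : exp B = ee1 • exp BX := by
    have hsplit : B = BX + (Complex.I * t * (Fintype.card W : ℂ)) • (1 : Matrix V V ℂ) := by
      rw [hB, hBX, hDm, smul_add, smul_smul]
    have hcomm : Commute BX ((Complex.I * t * (Fintype.card W : ℂ)) • (1 : Matrix V V ℂ)) :=
      (Commute.one_right BX).smul_right _
    rw [hsplit, Matrix.exp_add_of_commute _ _ hcomm, exp_smul_one, mul_smul_comm,
      mul_one, hee1]
  -- eigen facts for exp
  have hEf1 : exp A *ᵥ f1 = f1 := by
    have h0 : A *ᵥ f1 = (0 : ℂ) • f1 := by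
      rw [hA, Matrix.smul_mulVec, hJ1]; simp
    rw [exp_mulVec_eigen_s19 A f1 0 h0]; simp
  have hEf2 : exp A *ᵥ f2 = ee2 • f2 := by
    have h0 : A *ᵥ f2
        = (Complex.I * t * ((Fintype.card V : ℂ) + (Fintype.card W : ℂ))) • f2 := by
      rw [hA, Matrix.smul_mulVec, hJ2, smul_smul]
    rw [exp_mulVec_eigen_s19 A f2 _ h0, hee2]
  have hEXone : exp BX *ᵥ onV = onV := by
    have h0 : BX *ᵥ onV = (0 : ℂ) • onV := by
      rw [hBX, Matrix.smul_mulVec, hX1]; simp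
    rw [exp_mulVec_eigen_s19 BX onV 0 h0]; simp
  -- the X-side entry
  set z : ℂ := (exp BX *ᵥ vv) u with hz
  have hUX : qwU (lap AX) t u u = z + ((Fintype.card V : ℂ))⁻¹ := by
    have h0 : qwU (lap AX) t = exp BX := rfl
    rw [h0, entry_eq_mulVec_single (exp BX) u u]
    have hdec : (Pi.single u 1 : V → ℂ) = vv + ((Fintype.card V : ℂ))⁻¹ • onV := by
      rw [hvv]; funext a; simp
    rw [hdec, Matrix.mulVec_add, Matrix.mulVec_smul, hEXone]
    simp [hz, honV]
  -- the join-side entry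
  have hJoin : qwU (lap (joinAdj AX AY)) t (Sum.inl u) (Sum.inl u)
      = ee1 * z + ((Fintype.card V : ℂ) + (Fintype.card W : ℂ))⁻¹
        + ((Fintype.card V : ℂ))⁻¹ * ((Fintype.card V : ℂ) + (Fintype.card W : ℂ))⁻¹
          * (ee2 * (Fintype.card W : ℂ)) := by
    have h0 : qwU (lap (joinAdj AX AY)) t = exp A := rfl
    rw [h0, entry_eq_mulVec_single (exp A) (Sum.inl u) (Sum.inl u)]
    have hdec : (Pi.single (Sum.inl u) 1 : V ⊕ W → ℂ)
        = Sum.elim vv 0 + ((Fintype.card V : ℂ) + (Fintype.card W : ℂ))⁻¹ • f1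
          + (((Fintype.card V : ℂ))⁻¹
              * ((Fintype.card V : ℂ) + (Fintype.card W : ℂ))⁻¹) • f2 := by
      funext y
      cases y with
      | inl a =>
        have hsing : (Pi.single (Sum.inl u) (1 : ℂ) : V ⊕ W → ℂ) (Sum.inl a)
            = (Pi.single u (1 : ℂ) : V → ℂ) a := by
          simp [Pi.single_apply]
        simp only [Pi.add_apply, Sum.elim_inl, Pi.smul_apply, hf1, hf2, smul_eq_mul,
          hvv, Pi.sub_apply, honV]
        rw [hsing]
        field_simp
        ring
      | inr c =>
        have hsing : (Pi.single (Sum.inl u) (1 : ℂ) : V ⊕ W → ℂ) (Sum.inr c) = 0 := by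
          simp [Pi.single_apply]
        simp only [Pi.add_apply, Sum.elim_inr, Pi.smul_apply, hf1, hf2, smul_eq_mul]
        rw [hsing]
        field_simp
        simp
    rw [hdec, Matrix.mulVec_add, Matrix.mulVec_add, Matrix.mulVec_smul,
      Matrix.mulVec_smul, hEv, hEf1, hEf2, hexpB, Matrix.smul_mulVec]
    simp only [Pi.add_apply, Sum.elim_inl, Pi.smul_apply, hf1, hf2, smul_eq_mul]
    rw [← hz]
    ring
  -- now the estimate
  have habs_e1 : ‖ee1‖ = 1 := by
    rw [hee1]
    have h : Complex.I * t * (Fintype.card W : ℂ)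
        = ((t * (Fintype.card W : ℝ) : ℝ) : ℂ) * Complex.I := by push_cast; ring
    rw [h, Complex.norm_exp_ofReal_mul_I]
  have habs_e2 : ‖ee2‖ = 1 := by
    rw [hee2]
    have h : Complex.I * t * ((Fintype.card V : ℂ) + (Fintype.card W : ℂ))
        = ((t * ((Fintype.card V : ℝ) + (Fintype.card W : ℝ)) : ℝ) : ℂ) * Complex.I := by
      push_cast; ring
    rw [h, Complex.norm_exp_ofReal_mul_I]
  have hUXbound : C ≤ ‖ee1 * (z + ((Fintype.card V : ℂ))⁻¹)‖ := by
    rw [norm_mul, habs_e1, one_mul, ← hUX]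
    exact hsed t ht
  set wv : ℂ := ((Fintype.card V : ℂ) + ee2 * (Fintype.card W : ℂ))
      / ((Fintype.card V : ℂ) + (Fintype.card W : ℂ)) with hwv
  have hkey : qwU (lap (joinAdj AX AY)) t (Sum.inl u) (Sum.inl u)
      = ee1 * (z + ((Fintype.card V : ℂ))⁻¹)
        + ((Fintype.card V : ℂ))⁻¹ * (wv - ee1) := by
    rw [hJoin, hwv]
    field_simp
    ring
  have habs_w : ‖wv‖ ≤ 1 := by
    rw [hwv, norm_div]
    have hnum : ‖(Fintype.card V : ℂ) + ee2 * (Fintype.card W : ℂ)‖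
        ≤ (Fintype.card V : ℝ) + (Fintype.card W : ℝ) := by
      calc ‖(Fintype.card V : ℂ) + ee2 * (Fintype.card W : ℂ)‖
          ≤ ‖(Fintype.card V : ℂ)‖
            + ‖ee2 * (Fintype.card W : ℂ)‖ := norm_add_le _ _
        _ = (Fintype.card V : ℝ) + (Fintype.card W : ℝ) := by
            rw [norm_mul, habs_e2, one_mul, Complex.norm_natCast, Complex.norm_natCast]
    have hden : ‖(Fintype.card V : ℂ) + (Fintype.card W : ℂ)‖
        = (Fintype.card V : ℝ) + (Fintype.card W : ℝ) := by
      have h : (Fintype.card V : ℂ) + (Fintype.card W : ℂ)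
          = ((Fintype.card V + Fintype.card W : ℕ) : ℂ) := by push_cast; ring
      rw [h, Complex.norm_natCast]
      push_cast; ring
    rw [hden]
    have hpos : (0 : ℝ) < (Fintype.card V : ℝ) + (Fintype.card W : ℝ) := by
      have h : (0 : ℝ) < (Fintype.card V : ℝ) := by exact_mod_cast hNpos
      positivity
    rw [div_le_one hpos]
    exact hnum
  have habs_diff : ‖((Fintype.card V : ℂ))⁻¹ * (wv - ee1)‖
      ≤ 2 / (Fintype.card V : ℝ) := by
    rw [norm_mul, norm_inv, Complex.norm_natCast]
    have h2 : ‖wv - ee1‖ ≤ 2 := by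
      calc ‖wv - ee1‖ ≤ ‖wv‖ + ‖ee1‖ :=
            norm_sub_le _ _
        _ ≤ 1 + 1 := add_le_add habs_w habs_e1.le
        _ = 2 := by norm_num
    have hNR : (0 : ℝ) < (Fintype.card V : ℝ) := by exact_mod_cast hNpos
    calc ((Fintype.card V : ℝ))⁻¹ * ‖wv - ee1‖
        ≤ ((Fintype.card V : ℝ))⁻¹ * 2 := by
          apply mul_le_mul_of_nonneg_left h2
          positivity
      _ = 2 / (Fintype.card V : ℝ) := by ring
  rw [hkey]
  have htri : ‖ee1 * (z + ((Fintype.card V : ℂ))⁻¹)‖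
      ≤ ‖ee1 * (z + ((Fintype.card V : ℂ))⁻¹)
          + ((Fintype.card V : ℂ))⁻¹ * (wv - ee1)‖
        + ‖((Fintype.card V : ℂ))⁻¹ * (wv - ee1)‖ := by
    calc ‖ee1 * (z + ((Fintype.card V : ℂ))⁻¹)‖
        = ‖(ee1 * (z + ((Fintype.card V : ℂ))⁻¹)
            + ((Fintype.card V : ℂ))⁻¹ * (wv - ee1))
            - ((Fintype.card V : ℂ))⁻¹ * (wv - ee1)‖ := congrArg _ (by ring)
      _ ≤ _ := norm_sub_le _ _
  linarith [le_trans hUXbound htri, habs_diff]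
end
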